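/- arXiv:1608.06700 — 8 statements merged into one kernel-verified Lean document; each statement's English description precedes it below -/
import Mathlib

section
/- Hyperbolicity in time: for every θ ∈ ℝ, the matrix A(θ) := A₁·cosθ + A₂·sinθ admits the real diagonalization A(θ) = R(θ) · diag(v_θ − c·K_θ, v_θ, v_θ + c·K_θ) · L(θ), where v_θ = u·cosθ + v·sinθ. -/
open Real Matrix

set_option maxHeartbeats 1000000

lemma sw_aux (g h u v g11 g12 g22 K c cs sn : ℝ)
    (hK2 : K ^ 2 = g11 * cs ^ 2 + 2 * g12 * sn * cs + g22 * sn ^ 2)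
    (hc2 : c ^ 2 = g * h)
    (hK : K ≠ 0) (hc : c ≠ 0) (hg : g ≠ 0) :
    cs • !![u, h, 0; g * g11, u, 0; g * g12, 0, u] +
      sn • !![v, 0, h; g * g12, v, 0; g * g22, 0, v] =
    !![-1, 0, 1;
       (g / c) * ((g11 * cs + g12 * sn) / K), sn, (g / c) * ((g11 * cs + g12 * sn) / K);
       (g / c) * ((g12 * cs + g22 * sn) / K), -cs, (g / c) * ((g12 * cs + g22 * sn) / K)] *
    Matrix.diagonal ![u * cs + v * sn - c * K, u * cs + v * sn, u * cs + v * sn + c * K] *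
    !![-(1/2), c * cs / (2 * g * K), c * sn / (2 * g * K);
       0, ((g12 * cs + g22 * sn) / K) / K, -(((g11 * cs + g12 * sn) / K) / K);
       1/2, c * cs / (2 * g * K), c * sn / (2 * g * K)] := by
  ext i j
  fin_cases i <;> fin_cases j <;>
    simp only [Matrix.mul_apply, Fin.sum_univ_three, Matrix.diagonal_apply,
      Matrix.add_apply, Matrix.smul_apply, Matrix.of_apply, Matrix.cons_val', Matrix.cons_val_zero,
      Matrix.cons_val_one, Matrix.head_cons, Matrix.empty_val', Matrix.cons_val_fin_one,
      Matrix.head_fin_const, Matrix.cons_val_two, Matrix.tail_cons, smul_eq_mul, Fin.reduceFinMk,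
      Fin.zero_eta, Fin.mk_one, Fin.isValue, if_true, if_false, Fin.reduceEq, ite_true, ite_false,
      mul_zero, zero_mul, add_zero, zero_add, mul_one, one_mul] <;>
    field_simp <;>
    first
      | ring1
      | linear_combination (-(cs * K * 2)) * hc2
      | linear_combination (-(sn * K * 2)) * hc2
      | linear_combination (cs * u + sn * v) * c ^ 2 * K ^ 4 * g ^ 2 * 4 * hK2
      | linear_combination (cs * u + sn * v) * 2 * hK2


noncomputable def swK (g11 g12 g22 θ : ℝ) : ℝ :=
  Real.sqrt (g11 * Real.cos θ ^ 2 + 2 * g12 * Real.sin θ * Real.cos θ + g22 * Real.sin θ ^ 2)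

noncomputable def swC (g h : ℝ) : ℝ := Real.sqrt (g * h)

noncomputable def swGc (g11 g12 g22 θ : ℝ) : ℝ :=
  (g11 * Real.cos θ + g12 * Real.sin θ) / swK g11 g12 g22 θ

noncomputable def swGs (g11 g12 g22 θ : ℝ) : ℝ :=
  (g12 * Real.cos θ + g22 * Real.sin θ) / swK g11 g12 g22 θ

noncomputable def swL (g h g11 g12 g22 θ : ℝ) : Matrix (Fin 3) (Fin 3) ℝ :=
  !![-(1/2), swC g h * Real.cos θ / (2 * g * swK g11 g12 g22 θ),
        swC g h * Real.sin θ / (2 * g * swK g11 g12 g22 θ);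
     0, swGs g11 g12 g22 θ / swK g11 g12 g22 θ, -(swGc g11 g12 g22 θ / swK g11 g12 g22 θ);
     1/2, swC g h * Real.cos θ / (2 * g * swK g11 g12 g22 θ),
        swC g h * Real.sin θ / (2 * g * swK g11 g12 g22 θ)]

noncomputable def swR (g h g11 g12 g22 θ : ℝ) : Matrix (Fin 3) (Fin 3) ℝ :=
  !![-1, 0, 1;
     (g / swC g h) * swGc g11 g12 g22 θ, Real.sin θ, (g / swC g h) * swGc g11 g12 g22 θ;
     (g / swC g h) * swGs g11 g12 g22 θ, -Real.cos θ, (g / swC g h) * swGs g11 g12 g22 θ]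


noncomputable def swA1 (g h u g11 g12 : ℝ) : Matrix (Fin 3) (Fin 3) ℝ :=
  !![u, h, 0; g * g11, u, 0; g * g12, 0, u]

noncomputable def swA2 (g h v g12 g22 : ℝ) : Matrix (Fin 3) (Fin 3) ℝ :=
  !![v, 0, h; g * g12, v, 0; g * g22, 0, v]

/-- Hyperbolicity in time: real diagonalization of
`A(θ) = A₁ cosθ + A₂ sinθ` as `R(θ) · diag(v_θ − cK_θ, v_θ, v_θ + cK_θ) · L(θ)`. -/
theorem hyperbolicity_in_time
    (g h u v g11 g12 g22 : ℝ) (hg : 0 < g) (hh : 0 < h)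
    (h11 : 0 < g11) (hdet : 0 < g11 * g22 - g12 ^ 2) :
    ∀ θ : ℝ,
      Real.cos θ • swA1 g h u g11 g12 + Real.sin θ • swA2 g h v g12 g22 =
        swR g h g11 g12 g22 θ *
          Matrix.diagonal
            ![u * Real.cos θ + v * Real.sin θ - swC g h * swK g11 g12 g22 θ,
              u * Real.cos θ + v * Real.sin θ,
              u * Real.cos θ + v * Real.sin θ + swC g h * swK g11 g12 g22 θ] *
          swL g h g11 g12 g22 θ := by
  intro θ
  have hq : 0 < g11 * Real.cos θ ^ 2 + 2 * g12 * Real.sin θ * Real.cos θ + g22 * Real.sin θ ^ 2 := by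
    rcases eq_or_ne (Real.sin θ) 0 with h0 | h0
    · have hc1 : Real.cos θ ^ 2 = 1 := by nlinarith [Real.sin_sq_add_cos_sq θ]
      rw [h0]; nlinarith
    · have hs2 : 0 < Real.sin θ ^ 2 := by positivity
      nlinarith [sq_nonneg (g11 * Real.cos θ + g12 * Real.sin θ), mul_pos hdet hs2]
  have hKpos : 0 < swK g11 g12 g22 θ := Real.sqrt_pos.mpr hq
  have hK2 : swK g11 g12 g22 θ ^ 2 =
      g11 * Real.cos θ ^ 2 + 2 * g12 * Real.sin θ * Real.cos θ + g22 * Real.sin θ ^ 2 :=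
    Real.sq_sqrt hq.le
  have hcpos : 0 < swC g h := Real.sqrt_pos.mpr (mul_pos hg hh)
  have hc2 : swC g h ^ 2 = g * h := Real.sq_sqrt (mul_pos hg hh).le
  simp only [swA1, swA2, swR, swL, swGc, swGs]
  exact sw_aux g h u v g11 g12 g22 (swK g11 g12 g22 θ) (swC g h) (Real.cos θ) (Real.sin θ)
    hK2 hc2 hKpos.ne' hcpos.ne' hg.ne'
end

section
/- Equality of the two acoustic-wave contributions: ∫₀^{2π} R^{(1)}(θ) · w₁(Q₁(θ); θ) dθ = ∫₀^{2π} R^{(3)}(θ) · w₃(Q₃(θ); θ) dθ as vectors in ℝ³, where R^{(1)}(θ) = (−1, (g/c)·G_c(θ), (g/c)·G_s(θ)) and R^{(3)}(θ) = (1, (g/c)·G_c(θ), (g/c)·G_s(θ)). -/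
open Real Matrix

lemma swK_add_pi (g11 g12 g22 θ : ℝ) : swK g11 g12 g22 (θ + π) = swK g11 g12 g22 θ := by
  unfold swK
  rw [Real.cos_add_pi, Real.sin_add_pi]
  ring_nf

lemma swGc_add_pi (g11 g12 g22 θ : ℝ) : swGc g11 g12 g22 (θ + π) = -swGc g11 g12 g22 θ := by
  unfold swGc
  rw [swK_add_pi, Real.cos_add_pi, Real.sin_add_pi, ← neg_div]
  ring_nf

lemma swGs_add_pi (g11 g12 g22 θ : ℝ) : swGs g11 g12 g22 (θ + π) = -swGs g11 g12 g22 θ := by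
  unfold swGs
  rw [swK_add_pi, Real.cos_add_pi, Real.sin_add_pi, ← neg_div]
  ring_nf

lemma swK_add_two_pi (g11 g12 g22 θ : ℝ) : swK g11 g12 g22 (θ + 2 * π) = swK g11 g12 g22 θ := by
  unfold swK
  rw [Real.cos_add_two_pi, Real.sin_add_two_pi]

lemma swGc_add_two_pi (g11 g12 g22 θ : ℝ) : swGc g11 g12 g22 (θ + 2 * π) = swGc g11 g12 g22 θ := by
  unfold swGc
  rw [swK_add_two_pi, Real.cos_add_two_pi, Real.sin_add_two_pi]

lemma swGs_add_two_pi (g11 g12 g22 θ : ℝ) : swGs g11 g12 g22 (θ + 2 * π) = swGs g11 g12 g22 θ := by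
  unfold swGs
  rw [swK_add_two_pi, Real.cos_add_two_pi, Real.sin_add_two_pi]

/-- Equality of the two acoustic-wave contributions:
`∫₀^{2π} R⁽¹⁾(θ) w₁(Q₁(θ);θ) dθ = ∫₀^{2π} R⁽³⁾(θ) w₃(Q₃(θ);θ) dθ` in ℝ³. -/
theorem acoustic_contributions_eq
    (g h u v g11 g12 g22 x0 y0 τ : ℝ) (hg : 0 < g) (hh : 0 < h)
    (h11 : 0 < g11) (hdet : 0 < g11 * g22 - g12 ^ 2) (hτ : 0 < τ)
    (hb ub vb : ℝ × ℝ → ℝ)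
    (hhb : Continuous hb) (hub : Continuous ub) (hvb : Continuous vb) :
    let c := swC g h
    let Q1 : ℝ → ℝ × ℝ := fun θ =>
      (x0 - (u - c * swGc g11 g12 g22 θ) * τ, y0 - (v - c * swGs g11 g12 g22 θ) * τ)
    let Q3 : ℝ → ℝ × ℝ := fun θ =>
      (x0 - (u + c * swGc g11 g12 g22 θ) * τ, y0 - (v + c * swGs g11 g12 g22 θ) * τ)
    let w1 : ℝ × ℝ → ℝ → ℝ := fun p θ =>
      -hb p / 2 + (c / (2 * g * swK g11 g12 g22 θ)) *
        (ub p * Real.cos θ + vb p * Real.sin θ)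
    let w3 : ℝ × ℝ → ℝ → ℝ := fun p θ =>
      hb p / 2 + (c / (2 * g * swK g11 g12 g22 θ)) *
        (ub p * Real.cos θ + vb p * Real.sin θ)
    let R1 : ℝ → Fin 3 → ℝ := fun θ =>
      ![(-1 : ℝ), (g / c) * swGc g11 g12 g22 θ, (g / c) * swGs g11 g12 g22 θ]
    let R3 : ℝ → Fin 3 → ℝ := fun θ =>
      ![(1 : ℝ), (g / c) * swGc g11 g12 g22 θ, (g / c) * swGs g11 g12 g22 θ]
    (∫ θ in (0:ℝ)..(2 * π), w1 (Q1 θ) θ • R1 θ) =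
      ∫ θ in (0:ℝ)..(2 * π), w3 (Q3 θ) θ • R3 θ := by
  intro c Q1 Q3 w1 w3 R1 R3
  set F3 : ℝ → Fin 3 → ℝ := fun θ => w3 (Q3 θ) θ • R3 θ with hF3
  have hQ : ∀ θ, Q3 (θ + π) = Q1 θ := by
    intro θ
    simp only [Q1, Q3, swGc_add_pi, swGs_add_pi, Prod.mk.injEq]
    constructor <;> ring
  have h1 : ∀ θ, w1 (Q1 θ) θ • R1 θ = F3 (θ + π) := by
    intro θ
    simp only [hF3, hQ θ]
    funext i
    fin_cases i <;>
      simp [w1, w3, R1, R3, swK_add_pi, swGc_add_pi, swGs_add_pi,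
        Real.cos_add_pi, Real.sin_add_pi] <;> ring
  have hper : Function.Periodic F3 (2 * π) := by
    intro θ
    simp only [hF3, Q3, w3, R3, swK_add_two_pi, swGc_add_two_pi, swGs_add_two_pi,
      Real.cos_add_two_pi, Real.sin_add_two_pi]
  calc (∫ θ in (0:ℝ)..(2 * π), w1 (Q1 θ) θ • R1 θ)
      = ∫ θ in (0:ℝ)..(2 * π), F3 (θ + π) := by simp only [h1]
    _ = ∫ θ in (0 + π : ℝ)..(2 * π + π), F3 θ :=
        intervalIntegral.integral_comp_add_right F3 π
    _ = ∫ θ in (π : ℝ)..(π + 2 * π), F3 θ := by norm_num; ring_nf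
    _ = ∫ θ in (0 : ℝ)..(0 + 2 * π), F3 θ := hper.intervalIntegral_add_eq π 0
    _ = ∫ θ in (0:ℝ)..(2 * π), F3 θ := by norm_num
end

section
/- Roots of the second bicharacteristic speed (Lemma B.1): define d₂(θ) = v − c·G_s(θ). The function d₂ is strictly decreasing on [−π/2, π/2] and strictly increasing on [π/2, 3π/2], with maximum value v + c·√(g²²) attained at θ = −π/2 and minimum value v − c·√(g²²) attained at θ = π/2. If |v| < c·√(g²²), then d₂ has exactly two zeros in [−π/2, 3π/2), one lying in the open interval (−π/2, π/2) and one in (π/2, 3π/2); if |v| ≥ c·√(g²²), then d₂ has at most one zero in [−π/2, 3π/2). -/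
open Real Matrix

lemma sw_g22_pos {g11 g12 g22 : ℝ} (h11 : 0 < g11) (hdet : 0 < g11 * g22 - g12 ^ 2) :
    0 < g22 := by nlinarith [sq_nonneg g12]

lemma swQ_pos {g11 g12 g22 : ℝ} (h11 : 0 < g11) (hdet : 0 < g11 * g22 - g12 ^ 2) (θ : ℝ) :
    0 < g11 * Real.cos θ ^ 2 + 2 * g12 * Real.sin θ * Real.cos θ + g22 * Real.sin θ ^ 2 := by
  have hpy := Real.sin_sq_add_cos_sq θ
  rcases eq_or_ne (Real.sin θ) 0 with hs | hs
  · have hc : Real.cos θ ^ 2 = 1 := by nlinarith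
    rw [hs, hc]; simpa using h11
  · have h1 : 0 < (g11 * Real.cos θ + g12 * Real.sin θ) ^ 2 + (g11 * g22 - g12 ^ 2) * Real.sin θ ^ 2 := by
      have := sq_nonneg (g11 * Real.cos θ + g12 * Real.sin θ)
      have hs2 : 0 < Real.sin θ ^ 2 := by positivity
      nlinarith
    nlinarith [sq_nonneg (g11 * Real.cos θ + g12 * Real.sin θ)]

lemma swK_pos {g11 g12 g22 : ℝ} (h11 : 0 < g11) (hdet : 0 < g11 * g22 - g12 ^ 2) (θ : ℝ) :
    0 < swK g11 g12 g22 θ := Real.sqrt_pos.mpr (swQ_pos h11 hdet θ)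

lemma swK_sq {g11 g12 g22 : ℝ} (h11 : 0 < g11) (hdet : 0 < g11 * g22 - g12 ^ 2) (θ : ℝ) :
    swK g11 g12 g22 θ ^ 2
      = g11 * Real.cos θ ^ 2 + 2 * g12 * Real.sin θ * Real.cos θ + g22 * Real.sin θ ^ 2 :=
  Real.sq_sqrt (swQ_pos h11 hdet θ).le

lemma hasDerivAt_swGs {g11 g12 g22 : ℝ} (h11 : 0 < g11) (hdet : 0 < g11 * g22 - g12 ^ 2) (θ : ℝ) :
    HasDerivAt (swGs g11 g12 g22)
      ((g11 * g22 - g12 ^ 2) * Real.cos θ / swK g11 g12 g22 θ ^ 3) θ := by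
  have hQ := swQ_pos h11 hdet θ
  have hK := swK_pos h11 hdet θ
  have hK2 := swK_sq h11 hdet θ
  have hQd : HasDerivAt (fun x => g11 * Real.cos x ^ 2 + 2 * g12 * Real.sin x * Real.cos x
      + g22 * Real.sin x ^ 2)
      (g11 * (2 * Real.cos θ * (-Real.sin θ)) +
        (2 * g12 * Real.cos θ * Real.cos θ + 2 * g12 * Real.sin θ * (-Real.sin θ)) +
        g22 * (2 * Real.sin θ * Real.cos θ)) θ := by
    have hc := Real.hasDerivAt_cos θ
    have hs := Real.hasDerivAt_sin θ
    have h1 := ((hc.pow 2).const_mul g11)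
    have h2 := (((hs.const_mul (2 * g12)).mul hc))
    have h3 := ((hs.pow 2).const_mul g22)
    refine ((h1.add h2).add h3).congr_deriv ?_
    ring
  have hKd : HasDerivAt (swK g11 g12 g22)
      (1 / (2 * Real.sqrt (g11 * Real.cos θ ^ 2 + 2 * g12 * Real.sin θ * Real.cos θ + g22 * Real.sin θ ^ 2)) *
       (g11 * (2 * Real.cos θ * (-Real.sin θ)) +
        (2 * g12 * Real.cos θ * Real.cos θ + 2 * g12 * Real.sin θ * (-Real.sin θ)) +
        g22 * (2 * Real.sin θ * Real.cos θ))) θ :=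
    (Real.hasDerivAt_sqrt hQ.ne').comp θ hQd
  have hBd : HasDerivAt (fun x => g12 * Real.cos x + g22 * Real.sin x)
      (g12 * (-Real.sin θ) + g22 * Real.cos θ) θ :=
    ((Real.hasDerivAt_cos θ).const_mul g12).add ((Real.hasDerivAt_sin θ).const_mul g22)
  have hdiv := hBd.div hKd hK.ne'
  refine hdiv.congr_deriv ?_
  have hpy := Real.sin_sq_add_cos_sq θ
  rw [show Real.sqrt (g11 * Real.cos θ ^ 2 + 2 * g12 * Real.sin θ * Real.cos θ + g22 * Real.sin θ ^ 2)
      = swK g11 g12 g22 θ from rfl]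
  field_simp
  linear_combination
    (Real.cos θ * (g11 * g22 - g12 ^ 2)) * hpy
    + (g12 * -Real.sin θ + g22 * Real.cos θ) * hK2

lemma swGs_pi_div_two {g11 g12 g22 : ℝ} (h22 : 0 < g22) :
    swGs g11 g12 g22 (π / 2) = Real.sqrt g22 := by
  unfold swGs swK
  rw [Real.cos_pi_div_two, Real.sin_pi_div_two]
  norm_num [Real.div_sqrt]

lemma swGs_neg_pi_div_two {g11 g12 g22 : ℝ} (h22 : 0 < g22) :
    swGs g11 g12 g22 (-(π / 2)) = -Real.sqrt g22 := by
  unfold swGs swK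
  rw [Real.cos_neg, Real.sin_neg, Real.cos_pi_div_two, Real.sin_pi_div_two]
  norm_num [neg_div, Real.div_sqrt]

lemma swGs_three_pi_div_two {g11 g12 g22 : ℝ} (h22 : 0 < g22) :
    swGs g11 g12 g22 (3 * π / 2) = -Real.sqrt g22 := by
  unfold swGs swK
  rw [show (3 * π / 2 : ℝ) = π + π / 2 by ring, Real.cos_add, Real.sin_add,
    Real.cos_pi_div_two, Real.sin_pi_div_two, Real.cos_pi, Real.sin_pi]
  norm_num [neg_div, Real.div_sqrt]

/-- Roots of the second bicharacteristic speed (Lemma B.1). -/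
theorem roots_second_bicharacteristic_speed
    (g h u v g11 g12 g22 : ℝ) (hg : 0 < g) (hh : 0 < h)
    (h11 : 0 < g11) (hdet : 0 < g11 * g22 - g12 ^ 2) :
    let c := swC g h
    let d2 : ℝ → ℝ := fun θ => v - c * swGs g11 g12 g22 θ
    StrictAntiOn d2 (Set.Icc (-(π / 2)) (π / 2)) ∧
    StrictMonoOn d2 (Set.Icc (π / 2) (3 * π / 2)) ∧
    d2 (-(π / 2)) = v + c * Real.sqrt g22 ∧
    d2 (π / 2) = v - c * Real.sqrt g22 ∧
    (∀ θ ∈ Set.Icc (-(π / 2)) (3 * π / 2), d2 θ ≤ d2 (-(π / 2)) ∧ d2 (π / 2) ≤ d2 θ) ∧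
    (|v| < c * Real.sqrt g22 →
      ∃ θ1 ∈ Set.Ioo (-(π / 2)) (π / 2), ∃ θ2 ∈ Set.Ioo (π / 2) (3 * π / 2),
        d2 θ1 = 0 ∧ d2 θ2 = 0 ∧
        ∀ θ ∈ Set.Ico (-(π / 2)) (3 * π / 2), d2 θ = 0 → θ = θ1 ∨ θ = θ2) ∧
    (c * Real.sqrt g22 ≤ |v| →
      {θ ∈ Set.Ico (-(π / 2)) (3 * π / 2) | d2 θ = 0}.Subsingleton) := by
  intro c d2
  have h22 : 0 < g22 := sw_g22_pos h11 hdet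
  have hc : 0 < c := Real.sqrt_pos.mpr (mul_pos hg hh)
  have hD : 0 < g11 * g22 - g12 ^ 2 := hdet
  have hpi : 0 < π := Real.pi_pos
  -- derivative of d2
  have hd2deriv : ∀ θ : ℝ, HasDerivAt d2
      (-(c * ((g11 * g22 - g12 ^ 2) * Real.cos θ / swK g11 g12 g22 θ ^ 3))) θ :=
    fun θ => ((hasDerivAt_swGs h11 hdet θ).const_mul c).const_sub v
  have hcont : Continuous d2 := by
    have : ∀ θ : ℝ, DifferentiableAt ℝ d2 θ := fun θ => (hd2deriv θ).differentiableAt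
    exact Differentiable.continuous this
  -- strict antitone on [-π/2, π/2]
  have hanti : StrictAntiOn d2 (Set.Icc (-(π / 2)) (π / 2)) := by
    apply strictAntiOn_of_deriv_neg (convex_Icc _ _) hcont.continuousOn
    intro x hx
    rw [interior_Icc] at hx
    rw [(hd2deriv x).deriv]
    have hcos : 0 < Real.cos x := Real.cos_pos_of_mem_Ioo hx
    have hK := swK_pos h11 hdet x
    have : 0 < c * ((g11 * g22 - g12 ^ 2) * Real.cos x / swK g11 g12 g22 x ^ 3) := by
      positivity
    linarith
  -- strict monotone on [π/2, 3π/2]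
  have hmono : StrictMonoOn d2 (Set.Icc (π / 2) (3 * π / 2)) := by
    apply strictMonoOn_of_deriv_pos (convex_Icc _ _) hcont.continuousOn
    intro x hx
    rw [interior_Icc] at hx
    rw [(hd2deriv x).deriv]
    have hcos : Real.cos x < 0 :=
      Real.cos_neg_of_pi_div_two_lt_of_lt hx.1 (by linarith [hx.2])
    have hK := swK_pos h11 hdet x
    have h1 : c * ((g11 * g22 - g12 ^ 2) * Real.cos x / swK g11 g12 g22 x ^ 3) < 0 := by
      apply mul_neg_of_pos_of_neg hc
      apply div_neg_of_neg_of_pos _ (by positivity)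
      exact mul_neg_of_pos_of_neg hD hcos
    linarith
  -- endpoint values
  have hvneg : d2 (-(π / 2)) = v + c * Real.sqrt g22 := by
    show v - c * swGs g11 g12 g22 (-(π / 2)) = _
    rw [swGs_neg_pi_div_two h22]; ring
  have hvpos : d2 (π / 2) = v - c * Real.sqrt g22 := by
    show v - c * swGs g11 g12 g22 (π / 2) = _
    rw [swGs_pi_div_two h22]
  have hv3 : d2 (3 * π / 2) = v + c * Real.sqrt g22 := by
    show v - c * swGs g11 g12 g22 (3 * π / 2) = _
    rw [swGs_three_pi_div_two h22]; ring
  have hle1 : -(π / 2) ≤ (π / 2 : ℝ) := by linarith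
  have hle2 : (π / 2 : ℝ) ≤ 3 * π / 2 := by linarith
  -- extremality
  have hmax : ∀ θ ∈ Set.Icc (-(π / 2)) (3 * π / 2), d2 θ ≤ d2 (-(π / 2)) ∧ d2 (π / 2) ≤ d2 θ := by
    intro θ hθ
    rcases le_or_gt θ (π / 2) with hcase | hcase
    · have hmem : θ ∈ Set.Icc (-(π / 2)) (π / 2) := ⟨hθ.1, hcase⟩
      constructor
      · exact hanti.antitoneOn (Set.left_mem_Icc.mpr hle1) hmem hθ.1
      · exact hanti.antitoneOn hmem (Set.right_mem_Icc.mpr hle1) hcase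
    · have hmem : θ ∈ Set.Icc (π / 2) (3 * π / 2) := ⟨hcase.le, hθ.2⟩
      constructor
      · have := hmono.monotoneOn hmem (Set.right_mem_Icc.mpr hle2) hθ.2
        rw [hv3] at this; rw [hvneg]; exact this
      · exact hmono.monotoneOn (Set.left_mem_Icc.mpr hle2) hmem hcase.le
  refine ⟨hanti, hmono, hvneg, hvpos, hmax, ?_, ?_⟩
  · -- two roots case
    intro habs
    obtain ⟨hv1, hv2⟩ := abs_lt.mp habs
    have hpos1 : 0 < d2 (-(π / 2)) := by rw [hvneg]; linarith
    have hneg1 : d2 (π / 2) < 0 := by rw [hvpos]; linarith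
    have hpos3 : 0 < d2 (3 * π / 2) := by rw [hv3]; linarith
    obtain ⟨θ1, hθ1mem, hθ1⟩ :=
      intermediate_value_Icc' hle1 hcont.continuousOn ⟨hneg1.le, hpos1.le⟩
    obtain ⟨θ2, hθ2mem, hθ2⟩ :=
      intermediate_value_Icc hle2 hcont.continuousOn ⟨hneg1.le, hpos3.le⟩
    have hθ1o : θ1 ∈ Set.Ioo (-(π / 2)) (π / 2) := by
      rcases hθ1mem.1.lt_or_eq with h1 | h1
      · rcases hθ1mem.2.lt_or_eq with h2 | h2
        · exact ⟨h1, h2⟩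
        · exact absurd (h2 ▸ hθ1) hneg1.ne
      · exact absurd (h1 ▸ hθ1) hpos1.ne'
    have hθ2o : θ2 ∈ Set.Ioo (π / 2) (3 * π / 2) := by
      rcases hθ2mem.1.lt_or_eq with h1 | h1
      · rcases hθ2mem.2.lt_or_eq with h2 | h2
        · exact ⟨h1, h2⟩
        · exact absurd (h2 ▸ hθ2) hpos3.ne'
      · exact absurd (h1 ▸ hθ2) hneg1.ne
    refine ⟨θ1, hθ1o, θ2, hθ2o, hθ1, hθ2, ?_⟩
    intro θ hθ hθ0
    rcases le_or_gt θ (π / 2) with hcase | hcase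
    · left
      exact hanti.injOn ⟨hθ.1, hcase⟩ hθ1mem (by rw [hθ0, hθ1])
    · right
      exact hmono.injOn ⟨hcase.le, hθ.2.le⟩ hθ2mem (by rw [hθ0, hθ2])
  · -- at most one root case
    intro habs a ha b hb
    simp only [Set.mem_setOf_eq] at ha hb
    rcases le_or_gt 0 v with hv | hv
    · rw [abs_of_nonneg hv] at habs
      have hp : 0 ≤ d2 (π / 2) := by rw [hvpos]; linarith
      have key : ∀ x ∈ Set.Ico (-(π / 2)) (3 * π / 2), d2 x = 0 →
          x ∈ Set.Icc (-(π / 2)) (π / 2) := by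
        intro x hx hx0
        refine ⟨hx.1, ?_⟩
        by_contra hgt
        push_neg at hgt
        have := hmono (Set.left_mem_Icc.mpr hle2) ⟨hgt.le, hx.2.le⟩ hgt
        linarith [hx0 ▸ this]
      exact hanti.injOn (key a ha.1 ha.2) (key b hb.1 hb.2) (by rw [ha.2, hb.2])
    · rw [abs_of_neg hv] at habs
      have hp : d2 (-(π / 2)) ≤ 0 := by rw [hvneg]; linarith
      have key : ∀ x ∈ Set.Ico (-(π / 2)) (3 * π / 2), d2 x = 0 → x = -(π / 2) := by
        intro x hx hx0
        by_contra hne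
        have hxgt : -(π / 2) < x := lt_of_le_of_ne hx.1 (Ne.symm hne)
        rcases le_or_gt x (π / 2) with hcase | hcase
        · have := hanti (Set.left_mem_Icc.mpr hle1) ⟨hx.1, hcase⟩ hxgt
          linarith [hx0 ▸ this]
        · have := hmono ⟨hcase.le, hx.2.le⟩ (Set.right_mem_Icc.mpr hle2) hx.2
          rw [hx0, hv3] at this
          linarith
      rw [key a ha.1 ha.2, key b hb.1 hb.2]
end

section
/- Roots of the boundary-intersection function F_s (Lemma B.4): let ξ₀, η₀, x ∈ ℝ with cos η₀ ≠ 0 and (sec²η₀·tan x, cos ξ₀) ≠ (0,0), define F_s(θ) = sec²η₀ · tan x · (v − c·G_s(θ)) − cos ξ₀ · (u − c·G_c(θ)), and let θ_min ∈ ℝ be such that for all θ: −sec²η₀ · tan x · cosθ − cos ξ₀ · sinθ = √(sec⁴η₀·tan²x + cos²ξ₀) · sin(θ − θ_min); set θ_max = θ_min + π. If F_s(θ_min) < 0 < F_s(θ_max), then F_s has exactly two zeros in [θ_min, θ_min + 2π), one lying in the open interval (θ_min, θ_max) and one in (θ_max, θ_min + 2π); otherwise F_s has fewer than two zeros in [θ_min,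 θ_min + 2π). -/
open Real Matrix

theorem rootsFs_Qpos (g11 g12 g22 θ : ℝ) (h11 : 0 < g11) (hdet : 0 < g11 * g22 - g12 ^ 2) :
    0 < g11 * Real.cos θ ^ 2 + 2 * g12 * Real.sin θ * Real.cos θ + g22 * Real.sin θ ^ 2 := by
  rcases eq_or_ne (Real.sin θ) 0 with hs | hs
  · have h2 := Real.sin_sq_add_cos_sq θ
    rw [hs] at h2
    simp only [hs]
    nlinarith [h2]
  · have h1 : 0 < (g11 * g22 - g12 ^ 2) * Real.sin θ ^ 2 :=
      mul_pos hdet (by positivity)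
    nlinarith [sq_nonneg (g11 * Real.cos θ + g12 * Real.sin θ)]

theorem rootsFs_Kpos (g11 g12 g22 θ : ℝ) (h11 : 0 < g11) (hdet : 0 < g11 * g22 - g12 ^ 2) :
    0 < swK g11 g12 g22 θ :=
  Real.sqrt_pos.mpr (rootsFs_Qpos g11 g12 g22 θ h11 hdet)

theorem rootsFs_hasDerivAt_swGc (g11 g12 g22 θ : ℝ) (h11 : 0 < g11)
    (hdet : 0 < g11 * g22 - g12 ^ 2) :
    HasDerivAt (swGc g11 g12 g22)
      (-((g11 * g22 - g12 ^ 2) * Real.sin θ) / swK g11 g12 g22 θ ^ 3) θ := by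
  set Q : ℝ → ℝ := fun t => g11 * Real.cos t ^ 2 + 2 * g12 * Real.sin t * Real.cos t + g22 * Real.sin t ^ 2 with hQdef
  have hQpos : 0 < Q θ := rootsFs_Qpos g11 g12 g22 θ h11 hdet
  have h1 := Real.hasDerivAt_cos θ
  have h2 := Real.hasDerivAt_sin θ
  set Qd : ℝ := 2 * (Real.cos θ * (g12 * Real.cos θ + g22 * Real.sin θ)
      - Real.sin θ * (g11 * Real.cos θ + g12 * Real.sin θ)) with hQd
  have hQ : HasDerivAt Q Qd θ := by
    have h3 := (((h1.pow 2).const_mul g11).add ((h2.const_mul (2*g12)).mul h1)).add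
      ((h2.pow 2).const_mul g22)
    refine h3.congr_deriv ?_
    simp only [Nat.cast_ofNat, pow_one]
    ring
  have hKpos : 0 < swK g11 g12 g22 θ := Real.sqrt_pos.mpr hQpos
  have hK : HasDerivAt (swK g11 g12 g22) (Qd / (2 * swK g11 g12 g22 θ)) θ := hQ.sqrt hQpos.ne'
  have hN : HasDerivAt (fun t => g11 * Real.cos t + g12 * Real.sin t)
      (g11 * (-Real.sin θ) + g12 * Real.cos θ) θ := (h1.const_mul g11).add (h2.const_mul g12)
  have hG : HasDerivAt (swGc g11 g12 g22)
      (((g11 * (-Real.sin θ) + g12 * Real.cos θ) * swK g11 g12 g22 θ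
        - (g11 * Real.cos θ + g12 * Real.sin θ) * (Qd / (2 * swK g11 g12 g22 θ)))
        / swK g11 g12 g22 θ ^ 2) θ := hN.div hK hKpos.ne'
  convert hG using 1
  set k := swK g11 g12 g22 θ with hk
  have hk2 : k ^ 2 = Q θ := Real.sq_sqrt hQpos.le
  have key : 2 * (g11 * (-Real.sin θ) + g12 * Real.cos θ) * Q θ
      - (g11 * Real.cos θ + g12 * Real.sin θ) * Qd = -(2 * (g11 * g22 - g12 ^ 2) * Real.sin θ) := by
    simp only [hQdef, hQd]
    linear_combination (-2 * (g11 * g22 - g12 ^ 2) * Real.sin θ) * Real.sin_sq_add_cos_sq θ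
  have hkne : k ≠ 0 := (Real.sqrt_pos.mpr hQpos).ne'
  field_simp
  linear_combination (-1 : ℝ) * key + (-(2 * (g11 * (-Real.sin θ) + g12 * Real.cos θ))) * hk2

theorem rootsFs_hasDerivAt_swGs (g11 g12 g22 θ : ℝ) (h11 : 0 < g11)
    (hdet : 0 < g11 * g22 - g12 ^ 2) :
    HasDerivAt (swGs g11 g12 g22)
      ((g11 * g22 - g12 ^ 2) * Real.cos θ / swK g11 g12 g22 θ ^ 3) θ := by
  set Q : ℝ → ℝ := fun t => g11 * Real.cos t ^ 2 + 2 * g12 * Real.sin t * Real.cos t + g22 * Real.sin t ^ 2 with hQdef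
  have hQpos : 0 < Q θ := rootsFs_Qpos g11 g12 g22 θ h11 hdet
  have h1 := Real.hasDerivAt_cos θ
  have h2 := Real.hasDerivAt_sin θ
  set Qd : ℝ := 2 * (Real.cos θ * (g12 * Real.cos θ + g22 * Real.sin θ)
      - Real.sin θ * (g11 * Real.cos θ + g12 * Real.sin θ)) with hQd
  have hQ : HasDerivAt Q Qd θ := by
    have h3 := (((h1.pow 2).const_mul g11).add ((h2.const_mul (2*g12)).mul h1)).add
      ((h2.pow 2).const_mul g22)
    refine h3.congr_deriv ?_
    simp only [Nat.cast_ofNat, pow_one]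
    ring
  have hKpos : 0 < swK g11 g12 g22 θ := Real.sqrt_pos.mpr hQpos
  have hK : HasDerivAt (swK g11 g12 g22) (Qd / (2 * swK g11 g12 g22 θ)) θ := hQ.sqrt hQpos.ne'
  have hM : HasDerivAt (fun t => g12 * Real.cos t + g22 * Real.sin t)
      (g12 * (-Real.sin θ) + g22 * Real.cos θ) θ := (h1.const_mul g12).add (h2.const_mul g22)
  have hG : HasDerivAt (swGs g11 g12 g22)
      (((g12 * (-Real.sin θ) + g22 * Real.cos θ) * swK g11 g12 g22 θ
        - (g12 * Real.cos θ + g22 * Real.sin θ) * (Qd / (2 * swK g11 g12 g22 θ)))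
        / swK g11 g12 g22 θ ^ 2) θ := hM.div hK hKpos.ne'
  convert hG using 1
  set k := swK g11 g12 g22 θ with hk
  have hk2 : k ^ 2 = Q θ := Real.sq_sqrt hQpos.le
  have key : 2 * (g12 * (-Real.sin θ) + g22 * Real.cos θ) * Q θ
      - (g12 * Real.cos θ + g22 * Real.sin θ) * Qd = 2 * (g11 * g22 - g12 ^ 2) * Real.cos θ := by
    simp only [hQdef, hQd]
    linear_combination (2 * (g11 * g22 - g12 ^ 2) * Real.cos θ) * Real.sin_sq_add_cos_sq θ
  have hkne : k ≠ 0 := (Real.sqrt_pos.mpr hQpos).ne'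
  field_simp
  linear_combination (-1 : ℝ) * key + (-(2 * (g12 * (-Real.sin θ) + g22 * Real.cos θ))) * hk2
/-- Roots of the boundary-intersection function `F_s` (Lemma B.4). -/
theorem roots_Fs
    (g h u v g11 g12 g22 ξ0 η0 x θmin : ℝ) (hg : 0 < g) (hh : 0 < h)
    (h11 : 0 < g11) (hdet : 0 < g11 * g22 - g12 ^ 2) (hcos : Real.cos η0 ≠ 0)
    (hne : ((1 / Real.cos η0) ^ 2 * Real.tan x, Real.cos ξ0) ≠ (0, 0))
    (hθmin : ∀ θ : ℝ,
      -((1 / Real.cos η0) ^ 2 * Real.tan x) * Real.cos θ - Real.cos ξ0 * Real.sin θ =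
        Real.sqrt ((1 / Real.cos η0) ^ 4 * Real.tan x ^ 2 + Real.cos ξ0 ^ 2) *
          Real.sin (θ - θmin)) :
    let c := swC g h
    let Fs : ℝ → ℝ := fun θ =>
      (1 / Real.cos η0) ^ 2 * Real.tan x * (v - c * swGs g11 g12 g22 θ) -
        Real.cos ξ0 * (u - c * swGc g11 g12 g22 θ)
    let θmax := θmin + π
    (Fs θmin < 0 ∧ 0 < Fs θmax →
      ∃ θ1 ∈ Set.Ioo θmin θmax, ∃ θ2 ∈ Set.Ioo θmax (θmin + 2 * π),
        Fs θ1 = 0 ∧ Fs θ2 = 0 ∧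
        ∀ θ ∈ Set.Ico θmin (θmin + 2 * π), Fs θ = 0 → θ = θ1 ∨ θ = θ2) ∧
    (¬(Fs θmin < 0 ∧ 0 < Fs θmax) →
      {θ ∈ Set.Ico θmin (θmin + 2 * π) | Fs θ = 0}.Subsingleton) := by
  intro c Fs θmax
  set A : ℝ := (1 / Real.cos η0) ^ 2 * Real.tan x with hA
  set B : ℝ := Real.cos ξ0 with hB
  set R : ℝ := Real.sqrt ((1 / Real.cos η0) ^ 4 * Real.tan x ^ 2 + Real.cos ξ0 ^ 2) with hR
  have hABne : A ≠ 0 ∨ B ≠ 0 := by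
    by_contra hcon
    push_neg at hcon
    exact hne (Prod.ext hcon.1 hcon.2)
  have hRpos : 0 < R := by
    apply Real.sqrt_pos.mpr
    have hAsq : (1 / Real.cos η0) ^ 4 * Real.tan x ^ 2 = A ^ 2 := by rw [hA]; ring
    rw [hAsq]
    rcases hABne with hA0 | hB0
    · have := sq_nonneg B
      nlinarith [sq_pos_of_ne_zero hA0]
    · nlinarith [sq_pos_of_ne_zero hB0, sq_nonneg A]
  have hc : 0 < c := Real.sqrt_pos.mpr (mul_pos hg hh)
  -- the derivative of Fs
  have hFs' : ∀ θ : ℝ, HasDerivAt Fs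
      (c * (g11 * g22 - g12 ^ 2) / swK g11 g12 g22 θ ^ 3 * (R * Real.sin (θ - θmin))) θ := by
    intro θ
    have h1 : HasDerivAt (fun t => A * (v - c * swGs g11 g12 g22 t))
        (A * (-(c * ((g11 * g22 - g12 ^ 2) * Real.cos θ / swK g11 g12 g22 θ ^ 3)))) θ :=
      ((((rootsFs_hasDerivAt_swGs g11 g12 g22 θ h11 hdet).const_mul c).const_sub v)).const_mul A
    have h2 : HasDerivAt (fun t => B * (u - c * swGc g11 g12 g22 t))
        (B * (-(c * (-((g11 * g22 - g12 ^ 2) * Real.sin θ) / swK g11 g12 g22 θ ^ 3)))) θ :=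
      ((((rootsFs_hasDerivAt_swGc g11 g12 g22 θ h11 hdet).const_mul c).const_sub u)).const_mul B
    have h3 := h1.sub h2
    refine h3.congr_deriv ?_
    rw [← hθmin θ]
    ring
  have hcont : Continuous Fs := by
    apply continuous_iff_continuousAt.mpr
    exact fun θ => (hFs' θ).continuousAt
  have hKpos : ∀ θ, 0 < swK g11 g12 g22 θ := fun θ => rootsFs_Kpos g11 g12 g22 θ h11 hdet
  have hlt1 : θmin < θmax := by simp only [θmax]; linarith [Real.pi_pos]
  have hlt2 : θmax < θmin + 2 * π := by simp only [θmax]; linarith [Real.pi_pos]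
  -- strict monotonicity on [θmin, θmax]
  have hmono : StrictMonoOn Fs (Set.Icc θmin θmax) := by
    apply strictMonoOn_of_deriv_pos (convex_Icc _ _) hcont.continuousOn
    intro θ hθ
    rw [interior_Icc] at hθ
    rw [(hFs' θ).deriv]
    have hsin : 0 < Real.sin (θ - θmin) := by
      apply Real.sin_pos_of_pos_of_lt_pi <;> [linarith [hθ.1]; skip]
      have := hθ.2
      simp only [θmax] at this
      linarith
    have := hKpos θ
    positivity
  -- strict antitonicity on [θmax, θmin + 2π]
  have hanti : StrictAntiOn Fs (Set.Icc θmax (θmin + 2 * π)) := by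
    apply strictAntiOn_of_deriv_neg (convex_Icc _ _) hcont.continuousOn
    intro θ hθ
    rw [interior_Icc] at hθ
    rw [(hFs' θ).deriv]
    have h1 : θmax < θ := hθ.1
    have h2 : θ < θmin + 2 * π := hθ.2
    have hsin : Real.sin (θ - θmin) < 0 := by
      have hx : Real.sin (θ - θmin) = -Real.sin (θ - θmin - π) := by
        rw [show θ - θmin - π = θ - θmin - π from rfl, Real.sin_sub_pi]
        ring
      rw [hx]
      have hpos : 0 < Real.sin (θ - θmin - π) := by
        apply Real.sin_pos_of_pos_of_lt_pi
        · simp only [θmax] at h1; linarith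
        · linarith
      linarith
    have hK := hKpos θ
    have hnum : 0 < c * (g11 * g22 - g12 ^ 2) / swK g11 g12 g22 θ ^ 3 := by positivity
    have : R * Real.sin (θ - θmin) < 0 := mul_neg_of_pos_of_neg hRpos hsin
    exact mul_neg_of_pos_of_neg hnum this
  -- periodicity
  have hper : Fs (θmin + 2 * π) = Fs θmin := by
    simp only [Fs, swGs, swGc, swK, Real.cos_add_two_pi, Real.sin_add_two_pi]
  constructor
  · rintro ⟨hneg, hpos⟩
    have hcc : ContinuousOn Fs (Set.Icc θmin θmax) := hcont.continuousOn
    have hcc2 : ContinuousOn Fs (Set.Icc θmax (θmin + 2 * π)) := hcont.continuousOn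
    obtain ⟨θ1, hθ1mem, hθ1⟩ := intermediate_value_Ioo hlt1.le hcc
      (Set.mem_Ioo.mpr ⟨hneg, hpos⟩)
    have hFend : Fs (θmin + 2 * π) < 0 := by rw [hper]; exact hneg
    obtain ⟨θ2, hθ2mem, hθ2⟩ := intermediate_value_Ioo' hlt2.le hcc2
      (Set.mem_Ioo.mpr ⟨hFend, hpos⟩)
    refine ⟨θ1, hθ1mem, θ2, hθ2mem, hθ1, hθ2, ?_⟩
    rintro θ ⟨hθl, hθr⟩ hθ0
    rcases le_or_gt θ θmax with hcase | hcase
    · left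
      apply hmono.injOn (Set.mem_Icc.mpr ⟨hθl, hcase⟩)
        (Set.mem_Icc.mpr ⟨hθ1mem.1.le, hθ1mem.2.le⟩)
      rw [hθ0, hθ1]
    · right
      apply hanti.injOn (Set.mem_Icc.mpr ⟨hcase.le, hθr.le⟩)
        (Set.mem_Icc.mpr ⟨hθ2mem.1.le, hθ2mem.2.le⟩)
      rw [hθ0, hθ2]
  · intro hnot
    push_neg at hnot
    rcases le_or_gt 0 (Fs θmin) with h0 | h0
    · -- all zeros equal θmin
      have hzero : ∀ θ ∈ {θ ∈ Set.Ico θmin (θmin + 2 * π) | Fs θ = 0}, θ = θmin := by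
        rintro θ ⟨⟨hθl, hθr⟩, hθ0⟩
        by_contra hne'
        have hθgt : θmin < θ := lt_of_le_of_ne hθl (Ne.symm hne')
        rcases le_or_gt θ θmax with hcase | hcase
        · have := hmono (Set.mem_Icc.mpr ⟨le_refl _, hlt1.le⟩)
            (Set.mem_Icc.mpr ⟨hθl, hcase⟩) hθgt
          rw [hθ0] at this
          linarith
        · have := hanti (Set.mem_Icc.mpr ⟨hcase.le, hθr.le⟩)
            (Set.mem_Icc.mpr ⟨hlt2.le, le_refl _⟩) hθr
          rw [hθ0, hper] at this
          linarith
      intro a ha b hb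
      rw [hzero a ha, hzero b hb]
    · -- Fs θmin < 0, so Fs θmax ≤ 0 ; all zeros equal θmax
      have hmax0 : Fs θmax ≤ 0 := hnot h0
      have hzero : ∀ θ ∈ {θ ∈ Set.Ico θmin (θmin + 2 * π) | Fs θ = 0}, θ = θmax := by
        rintro θ ⟨⟨hθl, hθr⟩, hθ0⟩
        by_contra hne'
        rcases lt_or_gt_of_ne hne' with hcase | hcase
        · have := hmono (Set.mem_Icc.mpr ⟨hθl, hcase.le⟩)
            (Set.mem_Icc.mpr ⟨hlt1.le, le_refl _⟩) hcase
          rw [hθ0] at this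
          linarith
        · have := hanti (Set.mem_Icc.mpr ⟨le_refl _, hlt2.le⟩)
            (Set.mem_Icc.mpr ⟨hcase.le, hθr.le⟩) hcase
          rw [hθ0] at this
          linarith
      intro a ha b hb
      rw [hzero a ha, hzero b hb]
end

section
/- Evaluation of J₁ (formula (j1)): if H := (g¹¹)² + (g²²)² − 2g¹¹g²² + 4(g¹²)² > 0, then (1/(2π)) · ∫₀^{2π} sinθ·cosθ / K_θ² dθ = (g¹²/H) · (2 − (g¹¹ + g²²)·Λ), where Λ = (g¹¹g²² − (g¹²)²)^{−1/2}. -/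
open Real MeasureTheory intervalIntegral Filter Topology

private theorem algId' (g11 g12 g22 H D s c K2 K2' : ℝ) (hH : H ≠ 0) (hK : K2 ≠ 0) (hD : D ≠ 0)
    (hK1 : K2 = g11 * c ^ 2 + 2 * g12 * s * c + g22 * s ^ 2)
    (hK2 : K2' = g11 * (2 * c * (-s)) + 2 * g12 * (c * c + s * (-s)) + g22 * (2 * s * c))
    (hpy : s ^ 2 + c ^ 2 = 1)
    (hHd : H = g11 ^ 2 + g22 ^ 2 - 2 * g11 * g22 + 4 * g12 ^ 2) :
    ((g22 - g11) / (2 * H)) * (K2⁻¹ * K2') + (2 * g12 / H) * 1 +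
      (-(g12 * (g11 + g22)) / (H * D)) * (D / K2) = s * c / K2 := by
  have poly : (g22 - g11) / 2 * K2' + 2 * g12 * K2 - g12 * (g11 + g22) = H * (s * c) := by
    rw [hK1, hK2, hHd]
    linear_combination (g12 * (g11 + g22)) * hpy
  have hsc : s * c = ((g22 - g11) / 2 * K2' + 2 * g12 * K2 - g12 * (g11 + g22)) / H := by
    rw [eq_div_iff hH]
    linear_combination -poly
  rw [hsc]
  field_simp
  ring

private theorem keyLem (g11 g12 g22 D : ℝ) (hD : 0 < D) (hD2 : D ^ 2 = g11 * g22 - g12 ^ 2)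
    (hg22 : 0 < g22) (θ : ℝ) (hcos : Real.cos θ ≠ 0)
    (hK2pos : 0 < g11 * Real.cos θ ^ 2 + 2 * g12 * Real.sin θ * Real.cos θ +
      g22 * Real.sin θ ^ 2) :
    (1 / (1 + ((g22 * Real.tan θ + g12) / D) ^ 2)) * ((g22 * (1 / Real.cos θ ^ 2)) / D)
      = D / (g11 * Real.cos θ ^ 2 + 2 * g12 * Real.sin θ * Real.cos θ + g22 * Real.sin θ ^ 2) := by
  have e1 : 1 + ((g22 * Real.tan θ + g12) / D) ^ 2 =
      (g22 * (g11 * Real.cos θ ^ 2 + 2 * g12 * Real.sin θ * Real.cos θ + g22 * Real.sin θ ^ 2))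
        / (D ^ 2 * Real.cos θ ^ 2) := by
    rw [Real.tan_eq_sin_div_cos]
    field_simp
    linear_combination (Real.cos θ ^ 2) * hD2
  rw [e1]
  field_simp [hD.ne', hcos, (hK2pos).ne', hg22.ne']

private theorem K2deriv' (g11 g12 g22 : ℝ) (θ : ℝ) :
    HasDerivAt (fun x => g11 * Real.cos x ^ 2 + 2 * g12 * Real.sin x * Real.cos x +
        g22 * Real.sin x ^ 2)
      (g11 * (2 * Real.cos θ * (-Real.sin θ)) +
        2 * g12 * (Real.cos θ * Real.cos θ + Real.sin θ * (-Real.sin θ)) +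
        g22 * (2 * Real.sin θ * Real.cos θ)) θ := by
  have hs := Real.hasDerivAt_sin θ
  have hc := Real.hasDerivAt_cos θ
  have h1 : HasDerivAt (fun x => g11 * Real.cos x ^ 2)
      (g11 * (2 * Real.cos θ * (-Real.sin θ))) θ := by
    simpa [mul_comm, mul_assoc, mul_left_comm] using (hc.pow 2).const_mul g11
  have h2 : HasDerivAt (fun x => 2 * g12 * Real.sin x * Real.cos x)
      (2 * g12 * (Real.cos θ * Real.cos θ + Real.sin θ * (-Real.sin θ))) θ := by
    have := ((hs.const_mul (2 * g12)).mul hc)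
    exact this.congr_deriv (by ring)
  have h3 : HasDerivAt (fun x => g22 * Real.sin x ^ 2)
      (g22 * (2 * Real.sin θ * Real.cos θ)) θ := by
    simpa [mul_comm, mul_assoc, mul_left_comm] using (hs.pow 2).const_mul g22
  exact (h1.add h2).add h3

/-- Evaluation of `J₁` (formula (j1)). -/
theorem J1_eval (g11 g12 g22 : ℝ) (h11 : 0 < g11) (hdet : 0 < g11 * g22 - g12 ^ 2)
    (hH : 0 < g11 ^ 2 + g22 ^ 2 - 2 * g11 * g22 + 4 * g12 ^ 2) :
    (1 / (2 * π)) *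
      ∫ θ in (0:ℝ)..(2 * π),
        Real.sin θ * Real.cos θ /
          (g11 * Real.cos θ ^ 2 + 2 * g12 * Real.sin θ * Real.cos θ +
            g22 * Real.sin θ ^ 2)
    = (g12 / (g11 ^ 2 + g22 ^ 2 - 2 * g11 * g22 + 4 * g12 ^ 2)) *
        (2 - (g11 + g22) * (1 / Real.sqrt (g11 * g22 - g12 ^ 2))) := by
  have hg22 : 0 < g22 := by nlinarith [sq_nonneg g12]
  set D := Real.sqrt (g11 * g22 - g12 ^ 2) with hDdef
  have hD : 0 < D := Real.sqrt_pos.mpr hdet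
  have hD2 : D ^ 2 = g11 * g22 - g12 ^ 2 := Real.sq_sqrt hdet.le
  set H := g11 ^ 2 + g22 ^ 2 - 2 * g11 * g22 + 4 * g12 ^ 2 with hHdef
  set f : ℝ → ℝ := fun θ => Real.sin θ * Real.cos θ /
      (g11 * Real.cos θ ^ 2 + 2 * g12 * Real.sin θ * Real.cos θ + g22 * Real.sin θ ^ 2)
    with hfdef
  set c1 : ℝ := (g22 - g11) / (2 * H) with hc1
  set c2 : ℝ := 2 * g12 / H with hc2
  set c3 : ℝ := -(g12 * (g11 + g22)) / (H * D) with hc3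
  set F : ℝ → ℝ := fun x => c1 * Real.log (g11 * Real.cos x ^ 2 +
      2 * g12 * Real.sin x * Real.cos x + g22 * Real.sin x ^ 2) + c2 * x +
      c3 * Real.arctan ((g22 * Real.tan x + g12) / D) with hFdef
  have hK2pos : ∀ θ : ℝ, 0 < g11 * Real.cos θ ^ 2 + 2 * g12 * Real.sin θ * Real.cos θ +
      g22 * Real.sin θ ^ 2 := by
    intro θ
    nlinarith [sq_nonneg (g11 * Real.cos θ + g12 * Real.sin θ),
      sq_nonneg (g12 * Real.cos θ + g22 * Real.sin θ), Real.sin_sq_add_cos_sq θ]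
  have hK2c : Continuous (fun θ : ℝ => g11 * Real.cos θ ^ 2 +
      2 * g12 * Real.sin θ * Real.cos θ + g22 * Real.sin θ ^ 2) := by continuity
  have hfc : Continuous f := by
    apply Continuous.div (by continuity) hK2c
    exact fun θ => (hK2pos θ).ne'
  have hint : ∀ a b : ℝ, IntervalIntegrable f volume a b := fun a b =>
    hfc.intervalIntegrable a b
  -- derivative of F
  have hFd : ∀ x : ℝ, Real.cos x ≠ 0 → HasDerivAt F (f x) x := by
    intro x hcos
    have hK2d := K2deriv' g11 g12 g22 x
    have hlog : HasDerivAt (fun y => Real.log (g11 * Real.cos y ^ 2 +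
        2 * g12 * Real.sin y * Real.cos y + g22 * Real.sin y ^ 2))
        ((g11 * Real.cos x ^ 2 + 2 * g12 * Real.sin x * Real.cos x + g22 * Real.sin x ^ 2)⁻¹ *
          (g11 * (2 * Real.cos x * (-Real.sin x)) +
            2 * g12 * (Real.cos x * Real.cos x + Real.sin x * (-Real.sin x)) +
            g22 * (2 * Real.sin x * Real.cos x))) x :=
      (Real.hasDerivAt_log (hK2pos x).ne').comp (h₂ := Real.log) x hK2d
    have htan := Real.hasDerivAt_tan hcos
    have hu : HasDerivAt (fun y => (g22 * Real.tan y + g12) / D)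
        ((g22 * (1 / Real.cos x ^ 2)) / D) x :=
      ((htan.const_mul g22).add_const g12).div_const D
    have harc : HasDerivAt (fun y => Real.arctan ((g22 * Real.tan y + g12) / D))
        ((1 / (1 + ((g22 * Real.tan x + g12) / D) ^ 2)) *
          ((g22 * (1 / Real.cos x ^ 2)) / D)) x :=
      (Real.hasDerivAt_arctan ((g22 * Real.tan x + g12) / D)).comp (h₂ := Real.arctan) x hu
    have hsum := ((hlog.const_mul c1).add ((hasDerivAt_id x).const_mul c2)).add
      (harc.const_mul c3)
    have heq : c1 * ((g11 * Real.cos x ^ 2 + 2 * g12 * Real.sin x * Real.cos x +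
          g22 * Real.sin x ^ 2)⁻¹ *
          (g11 * (2 * Real.cos x * (-Real.sin x)) +
            2 * g12 * (Real.cos x * Real.cos x + Real.sin x * (-Real.sin x)) +
            g22 * (2 * Real.sin x * Real.cos x))) + c2 * 1 +
        c3 * ((1 / (1 + ((g22 * Real.tan x + g12) / D) ^ 2)) *
          ((g22 * (1 / Real.cos x ^ 2)) / D)) = f x := by
      rw [keyLem g11 g12 g22 D hD hD2 hg22 x hcos (hK2pos x), hc1, hc2, hc3, hfdef]
      exact algId' g11 g12 g22 H D (Real.sin x) (Real.cos x) _ _ hH.ne' (hK2pos x).ne' hD.ne'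
        rfl rfl (Real.sin_sq_add_cos_sq x) hHdef
    have : HasDerivAt F (c1 * ((g11 * Real.cos x ^ 2 + 2 * g12 * Real.sin x * Real.cos x +
          g22 * Real.sin x ^ 2)⁻¹ *
          (g11 * (2 * Real.cos x * (-Real.sin x)) +
            2 * g12 * (Real.cos x * Real.cos x + Real.sin x * (-Real.sin x)) +
            g22 * (2 * Real.sin x * Real.cos x))) + c2 * 1 +
        c3 * ((1 / (1 + ((g22 * Real.tan x + g12) / D) ^ 2)) *
          ((g22 * (1 / Real.cos x ^ 2)) / D))) x := hsum
    rwa [heq] at this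
  -- FTC on [-a, a] for 0 < a < π/2
  have hFTC : ∀ a ∈ Set.Ioo (0:ℝ) (π/2), ∫ x in (-a)..a, f x = F a - F (-a) := by
    intro a ha
    apply intervalIntegral.integral_eq_sub_of_hasDerivAt
    · intro x hx
      rw [Set.uIcc_of_le (by linarith [ha.1] : -a ≤ a)] at hx
      have hc : 0 < Real.cos x :=
        Real.cos_pos_of_mem_Ioo ⟨by linarith [hx.1, ha.2], by linarith [hx.2, ha.2]⟩
      exact hFd x hc.ne'
    · exact hint _ _
  -- limit of F a - F (-a)
  have hGA : ∀ a : ℝ, F a - F (-a) =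
      (c1 * (Real.log (g11 * Real.cos a ^ 2 + 2 * g12 * Real.sin a * Real.cos a +
          g22 * Real.sin a ^ 2) -
        Real.log (g11 * Real.cos (-a) ^ 2 + 2 * g12 * Real.sin (-a) * Real.cos (-a) +
          g22 * Real.sin (-a) ^ 2)) + c2 * (2 * a)) +
      c3 * (Real.arctan ((g22 * Real.tan a + g12) / D) -
        Real.arctan ((g22 * Real.tan (-a) + g12) / D)) := by
    intro a
    rw [hFdef]
    ring
  have htant : Tendsto Real.tan (𝓝[<] (π/2)) atTop := Real.tendsto_tan_pi_div_two
  have hu1 : Tendsto (fun a => (g22 * Real.tan a + g12) / D) (𝓝[<] (π/2)) atTop := by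
    apply Tendsto.atTop_div_const hD
    exact tendsto_atTop_add_const_right _ g12 (htant.const_mul_atTop hg22)
  have harc1 : Tendsto (fun a => Real.arctan ((g22 * Real.tan a + g12) / D)) (𝓝[<] (π/2))
      (𝓝 (π/2)) :=
    (Real.tendsto_arctan_atTop.mono_right nhdsWithin_le_nhds).comp hu1
  have hu2 : Tendsto (fun a => (g22 * Real.tan (-a) + g12) / D) (𝓝[<] (π/2)) atBot := by
    have : Tendsto (fun a => (-(g22 * Real.tan a) + g12) / D) (𝓝[<] (π/2)) atBot := by
      apply Tendsto.atBot_div_const hD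
      exact tendsto_atBot_add_const_right _ g12
        (tendsto_neg_atTop_atBot.comp (htant.const_mul_atTop hg22))
    refine this.congr fun a => ?_
    rw [Real.tan_neg]
    ring_nf
  have harc2 : Tendsto (fun a => Real.arctan ((g22 * Real.tan (-a) + g12) / D)) (𝓝[<] (π/2))
      (𝓝 (-(π/2))) :=
    (Real.tendsto_arctan_atBot.mono_right nhdsWithin_le_nhds).comp hu2
  have hGcont : Tendsto (fun a : ℝ =>
      c1 * (Real.log (g11 * Real.cos a ^ 2 + 2 * g12 * Real.sin a * Real.cos a +
          g22 * Real.sin a ^ 2) -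
        Real.log (g11 * Real.cos (-a) ^ 2 + 2 * g12 * Real.sin (-a) * Real.cos (-a) +
          g22 * Real.sin (-a) ^ 2)) + c2 * (2 * a)) (𝓝[<] (π/2)) (𝓝 (c2 * π)) := by
    have hcont : Continuous (fun a : ℝ =>
        c1 * (Real.log (g11 * Real.cos a ^ 2 + 2 * g12 * Real.sin a * Real.cos a +
            g22 * Real.sin a ^ 2) -
          Real.log (g11 * Real.cos (-a) ^ 2 + 2 * g12 * Real.sin (-a) * Real.cos (-a) +
            g22 * Real.sin (-a) ^ 2)) + c2 * (2 * a)) := by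
      have hlogc : Continuous (fun a : ℝ => Real.log (g11 * Real.cos a ^ 2 +
          2 * g12 * Real.sin a * Real.cos a + g22 * Real.sin a ^ 2)) :=
        Real.continuousOn_log.comp_continuous hK2c fun x => (hK2pos x).ne'
      exact ((continuous_const.mul (hlogc.sub (hlogc.comp continuous_neg))).add
        (continuous_const.mul (continuous_const.mul continuous_id)))
    have := (hcont.tendsto (π/2)).mono_left (nhdsWithin_le_nhds (s := Set.Iio (π/2)))
    have hval : c1 * (Real.log (g11 * Real.cos (π/2) ^ 2 +
          2 * g12 * Real.sin (π/2) * Real.cos (π/2) + g22 * Real.sin (π/2) ^ 2) -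
        Real.log (g11 * Real.cos (-(π/2)) ^ 2 + 2 * g12 * Real.sin (-(π/2)) * Real.cos (-(π/2)) +
          g22 * Real.sin (-(π/2)) ^ 2)) + c2 * (2 * (π/2)) = c2 * π := by
      norm_num
      exact Or.inl (by ring)
    rwa [hval] at this
  have hFsub : Tendsto (fun a => F a - F (-a)) (𝓝[<] (π/2)) (𝓝 (c2 * π + c3 * π)) := by
    have hA : Tendsto (fun a => c3 * (Real.arctan ((g22 * Real.tan a + g12) / D) -
        Real.arctan ((g22 * Real.tan (-a) + g12) / D))) (𝓝[<] (π/2))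
        (𝓝 (c3 * (π/2 - -(π/2)))) := (harc1.sub harc2).const_mul c3
    have := hGcont.add hA
    have hval : c2 * π + c3 * (π/2 - -(π/2)) = c2 * π + c3 * π := by ring
    rw [hval] at this
    exact this.congr fun a => (hGA a).symm
  -- limit of the integral
  have hsplit : ∀ a : ℝ, (∫ x in (-a)..a, f x) =
      (∫ x in (0:ℝ)..a, f x) - ∫ x in (0:ℝ)..(-a), f x := by
    intro a
    rw [← intervalIntegral.integral_add_adjacent_intervals (hint (-a) 0) (hint 0 a),
      intervalIntegral.integral_symm]
    ring
  have hPc : Continuous (fun b : ℝ => ∫ x in (0:ℝ)..b, f x) :=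
    intervalIntegral.continuous_primitive hint 0
  have hIc : Tendsto (fun a => ∫ x in (-a)..a, f x) (𝓝[<] (π/2))
      (𝓝 (∫ x in (-(π/2))..(π/2), f x)) := by
    have h1 : Tendsto (fun a : ℝ => (∫ x in (0:ℝ)..a, f x) - ∫ x in (0:ℝ)..(-a), f x)
        (𝓝 (π/2)) (𝓝 ((∫ x in (0:ℝ)..(π/2), f x) - ∫ x in (0:ℝ)..(-(π/2)), f x)) :=
      (hPc.tendsto _).sub ((hPc.tendsto _).comp (continuous_neg.tendsto _))
    have h2 := h1.mono_left (nhdsWithin_le_nhds (s := Set.Iio (π/2)))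
    rw [← hsplit (π/2)] at h2
    exact h2.congr fun a => (hsplit a).symm
  -- identify the half-period integral
  have hmem : Set.Ioo (0:ℝ) (π/2) ∈ 𝓝[<] (π/2) :=
    Ioo_mem_nhdsLT_of_mem ⟨by positivity, le_refl _⟩
  have hEv : (fun a => ∫ x in (-a)..a, f x) =ᶠ[𝓝[<] (π/2)] (fun a => F a - F (-a)) := by
    filter_upwards [hmem] with a ha
    exact hFTC a ha
  have hJ : (∫ x in (-(π/2))..(π/2), f x) = c2 * π + c3 * π :=
    tendsto_nhds_unique hIc (hFsub.congr' hEv.symm)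
  -- periodicity
  have hper : ∀ x : ℝ, f (x + π) = f x := by
    intro x
    rw [hfdef]
    simp only [Real.sin_add, Real.cos_add, Real.sin_pi, Real.cos_pi]
    ring_nf
  have hper2 : Function.Periodic f (2 * π) := by
    intro x
    have : x + 2 * π = x + π + π := by ring
    rw [this, hper, hper]
  have hshift : (∫ x in (π/2)..(3 * (π/2)), f x) = ∫ x in (-(π/2))..(π/2), f x := by
    have h1 := intervalIntegral.integral_comp_add_right (a := -(π/2)) (b := π/2) f π
    have h2 : (∫ x in (-(π/2))..(π/2), f (x + π)) = ∫ x in (-(π/2))..(π/2), f x := by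
      simp only [hper]
    rw [h2] at h1
    have hb1 : -(π/2) + π = π/2 := by ring
    have hb2 : π/2 + π = 3 * (π/2) := by ring
    rw [hb1, hb2] at h1
    exact h1.symm
  have hfull : (∫ x in (0:ℝ)..(2 * π), f x) = 2 * (c2 * π + c3 * π) := by
    have h0 := hper2.intervalIntegral_add_eq 0 (-(π/2))
    have hb : (0:ℝ) + 2 * π = 2 * π := by ring
    have hb2 : -(π/2) + 2 * π = 3 * (π/2) := by ring
    rw [hb, hb2] at h0
    rw [h0, ← intervalIntegral.integral_add_adjacent_intervals (hint (-(π/2)) (π/2))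
      (hint (π/2) (3 * (π/2))), hshift, hJ]
    ring
  -- conclude
  rw [hfull]
  have hpi : (π:ℝ) ≠ 0 := Real.pi_ne_zero
  rw [hc2, hc3]
  field_simp
  ring
end

section
/- Evaluation of J₂ (formula (j2)): if H := (g¹¹)² + (g²²)² − 2g¹¹g²² + 4(g¹²)² > 0, then (1/(2π)) · ∫₀^{2π} sin²θ / K_θ² dθ = (1/H) · ( ((g¹¹)² − g¹¹g²² + 2(g¹²)²)·Λ + g²² − g¹¹ ), where Λ = (g¹¹g²² − (g¹²)²)^{−1/2}. -/
open Real

noncomputable section J2auxsec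

lemma J2_key1 (K N Nd s D : ℝ) (hK : 0 < K) (hs : 0 < s) (hD : s ^ 2 = D)
    (hkey : D + N ^ 2 = K ^ 2 + K * Nd) :
    (1 / (1 + (N / (K + s)) ^ 2)) * ((Nd * (K + s) - N * (2 * N)) / (K + s) ^ 2)
      = (s - K) / K := by
  have hKs : (0:ℝ) < K + s := by linarith
  have hKne : K ≠ 0 := hK.ne'
  have hKsne : K + s ≠ 0 := hKs.ne'
  have h2 : 1 + (N / (K + s)) ^ 2 ≠ 0 := by positivity
  field_simp
  linear_combination (-K - s) * hkey + (-K - s) * hD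

def J2K (g11 g12 g22 θ : ℝ) : ℝ :=
  g11 * Real.cos θ ^ 2 + 2 * g12 * Real.sin θ * Real.cos θ + g22 * Real.sin θ ^ 2

def J2N (g11 g12 g22 θ : ℝ) : ℝ :=
  (g22 - g11) * Real.sin θ * Real.cos θ + g12 * (Real.cos θ ^ 2 - Real.sin θ ^ 2)

def J2Nd (g11 g12 g22 θ : ℝ) : ℝ :=
  (g22 - g11) * (Real.cos θ ^ 2 - Real.sin θ ^ 2) - 4 * g12 * Real.sin θ * Real.cos θ

def J2Phi (g11 g12 g22 θ : ℝ) : ℝ :=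
  ((g22 - g11) / (g11 ^ 2 + g22 ^ 2 - 2 * g11 * g22 + 4 * g12 ^ 2)) * θ +
  ((g11 ^ 2 - g11 * g22 + 2 * g12 ^ 2) / (g11 ^ 2 + g22 ^ 2 - 2 * g11 * g22 + 4 * g12 ^ 2)
      / Real.sqrt (g11 * g22 - g12 ^ 2)) *
    (θ + Real.arctan (J2N g11 g12 g22 θ / (J2K g11 g12 g22 θ + Real.sqrt (g11 * g22 - g12 ^ 2)))) +
  (-g12 / (g11 ^ 2 + g22 ^ 2 - 2 * g11 * g22 + 4 * g12 ^ 2)) * Real.log (J2K g11 g12 g22 θ)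

lemma J2K_pos (g11 g12 g22 : ℝ) (h11 : 0 < g11) (hdet : 0 < g11 * g22 - g12 ^ 2) (θ : ℝ) :
    0 < J2K g11 g12 g22 θ := by
  have hpy := Real.sin_sq_add_cos_sq θ
  rcases eq_or_ne (Real.sin θ) 0 with h | h
  · have hc : Real.cos θ ^ 2 = 1 := by rw [h] at hpy; simpa using hpy
    simp only [J2K, h, hc]
    nlinarith
  · have hsn : 0 < Real.sin θ ^ 2 := by positivity
    have h1 : 0 < (g11 * g22 - g12 ^ 2) * Real.sin θ ^ 2 := mul_pos hdet hsn
    have h2 : 0 ≤ (g11 * Real.cos θ + g12 * Real.sin θ) ^ 2 := sq_nonneg _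
    have : 0 < g11 * J2K g11 g12 g22 θ := by
      have : g11 * J2K g11 g12 g22 θ =
          (g11 * Real.cos θ + g12 * Real.sin θ) ^ 2 + (g11 * g22 - g12 ^ 2) * Real.sin θ ^ 2 := by
        simp only [J2K]; ring
      linarith [this]
    nlinarith [this]

lemma J2K_hasDeriv (g11 g12 g22 θ : ℝ) :
    HasDerivAt (J2K g11 g12 g22) (2 * J2N g11 g12 g22 θ) θ := by
  have h := (((Real.hasDerivAt_cos θ).pow 2).const_mul g11).add
    ((((Real.hasDerivAt_sin θ).mul (Real.hasDerivAt_cos θ)).const_mul (2 * g12)).add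
      (((Real.hasDerivAt_sin θ).pow 2).const_mul g22))
  convert h using 1
  · rfl
  · rfl
  · ext x; simp only [J2K, Pi.add_apply, Pi.mul_apply, Pi.pow_apply]; ring
  · simp only [J2N]; ring

lemma J2N_hasDeriv (g11 g12 g22 θ : ℝ) :
    HasDerivAt (J2N g11 g12 g22) (J2Nd g11 g12 g22 θ) θ := by
  have h := (((Real.hasDerivAt_sin θ).mul (Real.hasDerivAt_cos θ)).const_mul (g22 - g11)).add
    ((((Real.hasDerivAt_cos θ).pow 2).sub ((Real.hasDerivAt_sin θ).pow 2)).const_mul g12)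
  convert h using 1
  · rfl
  · rfl
  · ext x; simp only [J2N, Pi.add_apply, Pi.sub_apply, Pi.mul_apply, Pi.pow_apply]; ring
  · simp only [J2Nd]; ring

lemma J2_hkey (g11 g12 g22 θ : ℝ) :
    (g11 * g22 - g12 ^ 2) + J2N g11 g12 g22 θ ^ 2 =
      J2K g11 g12 g22 θ ^ 2 + J2K g11 g12 g22 θ * J2Nd g11 g12 g22 θ := by
  have hpy := Real.sin_sq_add_cos_sq θ
  simp only [J2K, J2N, J2Nd]
  linear_combination ((g12 ^ 2 - g11 * g22) *
    (1 + Real.sin θ ^ 2 + Real.cos θ ^ 2)) * hpy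

lemma J2Phi_hasDeriv (g11 g12 g22 : ℝ) (h11 : 0 < g11) (hdet : 0 < g11 * g22 - g12 ^ 2)
    (hH : 0 < g11 ^ 2 + g22 ^ 2 - 2 * g11 * g22 + 4 * g12 ^ 2) (θ : ℝ) :
    HasDerivAt (J2Phi g11 g12 g22)
      (Real.sin θ ^ 2 / J2K g11 g12 g22 θ) θ := by
  set s := Real.sqrt (g11 * g22 - g12 ^ 2) with hsdef
  have hs : 0 < s := Real.sqrt_pos.2 hdet
  have hs2 : s ^ 2 = g11 * g22 - g12 ^ 2 := Real.sq_sqrt hdet.le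
  have hKpos := J2K_pos g11 g12 g22 h11 hdet θ
  have hKs : (0:ℝ) < J2K g11 g12 g22 θ + s := by linarith
  have hK := J2K_hasDeriv g11 g12 g22 θ
  have hN := J2N_hasDeriv g11 g12 g22 θ
  have hu : HasDerivAt (fun x => J2N g11 g12 g22 x / (J2K g11 g12 g22 x + s))
      ((J2Nd g11 g12 g22 θ * (J2K g11 g12 g22 θ + s) -
        J2N g11 g12 g22 θ * (2 * J2N g11 g12 g22 θ)) / (J2K g11 g12 g22 θ + s) ^ 2) θ := by
    exact hN.div (hK.add_const s) hKs.ne'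
  have harctan := (Real.hasDerivAt_arctan
      (J2N g11 g12 g22 θ / (J2K g11 g12 g22 θ + s))).comp θ hu
  have hlog := (Real.hasDerivAt_log hKpos.ne').comp θ hK
  have htot := (((hasDerivAt_id θ).const_mul
        ((g22 - g11) / (g11 ^ 2 + g22 ^ 2 - 2 * g11 * g22 + 4 * g12 ^ 2))).add
      ((((hasDerivAt_id θ).add harctan).const_mul
        ((g11 ^ 2 - g11 * g22 + 2 * g12 ^ 2) / (g11 ^ 2 + g22 ^ 2 - 2 * g11 * g22 + 4 * g12 ^ 2) / s)).add
        (hlog.const_mul (-g12 / (g11 ^ 2 + g22 ^ 2 - 2 * g11 * g22 + 4 * g12 ^ 2)))))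
  have hk1 := J2_key1 (J2K g11 g12 g22 θ) (J2N g11 g12 g22 θ) (J2Nd g11 g12 g22 θ) s
    (g11 * g22 - g12 ^ 2) hKpos hs hs2 (J2_hkey g11 g12 g22 θ)
  have hk2 : (g22 - g11) * J2K g11 g12 g22 θ + (g11 ^ 2 - g11 * g22 + 2 * g12 ^ 2)
      - 2 * g12 * J2N g11 g12 g22 θ
      = (g11 ^ 2 + g22 ^ 2 - 2 * g11 * g22 + 4 * g12 ^ 2) * Real.sin θ ^ 2 := by
    have hpy := Real.sin_sq_add_cos_sq θ
    simp only [J2K, J2N]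
    linear_combination (g11 * g22 - g11 ^ 2 - 2 * g12 ^ 2) * hpy
  have h1 : (1 : ℝ) + (s - J2K g11 g12 g22 θ) / J2K g11 g12 g22 θ = s / J2K g11 g12 g22 θ := by
    field_simp
    ring
  convert htot using 1
  · rfl
  · rfl
  · ext x
    simp only [J2Phi, Function.comp_def, id, ← hsdef, Pi.add_apply]
    ring
  rw [hk1, h1]
  have hHne : (g11 ^ 2 + g22 ^ 2 - 2 * g11 * g22 + 4 * g12 ^ 2) ≠ 0 := hH.ne'
  have expand : (g22 - g11) / (g11 ^ 2 + g22 ^ 2 - 2 * g11 * g22 + 4 * g12 ^ 2) * 1 +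
      ((g11 ^ 2 - g11 * g22 + 2 * g12 ^ 2) / (g11 ^ 2 + g22 ^ 2 - 2 * g11 * g22 + 4 * g12 ^ 2) / s *
        (s / J2K g11 g12 g22 θ) +
        -g12 / (g11 ^ 2 + g22 ^ 2 - 2 * g11 * g22 + 4 * g12 ^ 2) *
          ((J2K g11 g12 g22 θ)⁻¹ * (2 * J2N g11 g12 g22 θ)))
      = ((g22 - g11) * J2K g11 g12 g22 θ + (g11 ^ 2 - g11 * g22 + 2 * g12 ^ 2)
          - 2 * g12 * J2N g11 g12 g22 θ) /
        ((g11 ^ 2 + g22 ^ 2 - 2 * g11 * g22 + 4 * g12 ^ 2) * J2K g11 g12 g22 θ) := by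
    field_simp
    ring
  rw [expand, hk2, mul_div_mul_left _ _ hHne]

end J2auxsec

/-- Evaluation of `J₂` (formula (j2)). -/
theorem J2_eval (g11 g12 g22 : ℝ) (h11 : 0 < g11) (hdet : 0 < g11 * g22 - g12 ^ 2)
    (hH : 0 < g11 ^ 2 + g22 ^ 2 - 2 * g11 * g22 + 4 * g12 ^ 2) :
    (1 / (2 * π)) *
      ∫ θ in (0:ℝ)..(2 * π),
        Real.sin θ ^ 2 /
          (g11 * Real.cos θ ^ 2 + 2 * g12 * Real.sin θ * Real.cos θ +
            g22 * Real.sin θ ^ 2)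
    = (1 / (g11 ^ 2 + g22 ^ 2 - 2 * g11 * g22 + 4 * g12 ^ 2)) *
        ((g11 ^ 2 - g11 * g22 + 2 * g12 ^ 2) * (1 / Real.sqrt (g11 * g22 - g12 ^ 2)) +
          g22 - g11) := by
  have hpi := Real.pi_pos
  set s := Real.sqrt (g11 * g22 - g12 ^ 2) with hsdef
  have hs : 0 < s := Real.sqrt_pos.2 hdet
  have hcont : Continuous fun θ => Real.sin θ ^ 2 / J2K g11 g12 g22 θ := by
    apply Continuous.div
    · continuity
    · unfold J2K; continuity
    · exact fun θ => (J2K_pos g11 g12 g22 h11 hdet θ).ne'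
  have hint : (∫ θ in (0:ℝ)..(2 * π), Real.sin θ ^ 2 / J2K g11 g12 g22 θ)
      = J2Phi g11 g12 g22 (2 * π) - J2Phi g11 g12 g22 0 := by
    exact intervalIntegral.integral_eq_sub_of_hasDerivAt
      (fun x _ => J2Phi_hasDeriv g11 g12 g22 h11 hdet hH x)
      (hcont.intervalIntegrable 0 (2 * π))
  have hint' : (∫ θ in (0:ℝ)..(2 * π),
      Real.sin θ ^ 2 /
        (g11 * Real.cos θ ^ 2 + 2 * g12 * Real.sin θ * Real.cos θ + g22 * Real.sin θ ^ 2))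
      = J2Phi g11 g12 g22 (2 * π) - J2Phi g11 g12 g22 0 := hint
  rw [hint']
  have hval : J2Phi g11 g12 g22 (2 * π) - J2Phi g11 g12 g22 0 =
      2 * π * ((g22 - g11) / (g11 ^ 2 + g22 ^ 2 - 2 * g11 * g22 + 4 * g12 ^ 2) +
        (g11 ^ 2 - g11 * g22 + 2 * g12 ^ 2) / (g11 ^ 2 + g22 ^ 2 - 2 * g11 * g22 + 4 * g12 ^ 2) / s) := by
    simp only [J2Phi, J2K, J2N, Real.sin_two_pi, Real.cos_two_pi, Real.sin_zero, Real.cos_zero,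
      ← hsdef]
    ring
  rw [hval]
  have hHne : (g11 ^ 2 + g22 ^ 2 - 2 * g11 * g22 + 4 * g12 ^ 2) ≠ 0 := hH.ne'
  field_simp
  ring
end

section
/- Evaluation of J₃ (formula (j3)): if H := (g¹¹)² + (g²²)² − 2g¹¹g²² + 4(g¹²)² > 0, then (1/(2π)) · ∫₀^{2π} cos²θ / K_θ² dθ = (1/H) · ( ((g²²)² − g¹¹g²² + 2(g¹²)²)·Λ + g¹¹ − g²² ), where Λ = (g¹¹g²² − (g¹²)²)^{−1/2}. -/
open Real

lemma denom_pos (a b : ℝ) (ha : 0 < a) (hb : 0 < b) (θ : ℝ) :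
    0 < a * Real.cos θ ^ 2 + b * Real.sin θ ^ 2 := by
  have hs := Real.sin_sq_add_cos_sq θ
  have h1 : min a b * Real.sin θ ^ 2 + min a b * Real.cos θ ^ 2 ≤
      b * Real.sin θ ^ 2 + a * Real.cos θ ^ 2 :=
    add_le_add (mul_le_mul_of_nonneg_right (min_le_right a b) (sq_nonneg _))
      (mul_le_mul_of_nonneg_right (min_le_left a b) (sq_nonneg _))
  have h2 : 0 < min a b := lt_min ha hb
  nlinarith [h1, h2, hs]

lemma J3_antideriv (p q : ℝ) (hp : 0 < p) (hq : 0 < q) (θ : ℝ) :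
    HasDerivAt (fun t => (1 / (Real.sqrt p * Real.sqrt q)) *
      (t + Real.arctan ((Real.sqrt q - Real.sqrt p) * Real.sin t * Real.cos t /
        (Real.sqrt p * Real.cos t ^ 2 + Real.sqrt q * Real.sin t ^ 2))))
      (1 / (p * Real.cos θ ^ 2 + q * Real.sin θ ^ 2)) θ := by
  set a := Real.sqrt p with hadef
  set b := Real.sqrt q with hbdef
  have ha : 0 < a := Real.sqrt_pos.mpr hp
  have hb : 0 < b := Real.sqrt_pos.mpr hq
  have ha2 : a ^ 2 = p := Real.sq_sqrt hp.le
  have hb2 : b ^ 2 = q := Real.sq_sqrt hq.le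
  have hD : 0 < a * Real.cos θ ^ 2 + b * Real.sin θ ^ 2 := denom_pos a b ha hb θ
  have hPQ : 0 < p * Real.cos θ ^ 2 + q * Real.sin θ ^ 2 := denom_pos p q hp hq θ
  have hs := Real.sin_sq_add_cos_sq θ
  -- derivative of numerator
  have hN : HasDerivAt (fun t => (b - a) * Real.sin t * Real.cos t)
      ((b - a) * (Real.cos θ ^ 2 - Real.sin θ ^ 2)) θ := by
    have := (((Real.hasDerivAt_sin θ).const_mul (b - a)).mul (Real.hasDerivAt_cos θ))
    refine this.congr_deriv ?_
    ring
  have hDd : HasDerivAt (fun t => a * Real.cos t ^ 2 + b * Real.sin t ^ 2)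
      (2 * (b - a) * Real.sin θ * Real.cos θ) θ := by
    have h1 := ((Real.hasDerivAt_cos θ).pow 2).const_mul a
    have h2 := ((Real.hasDerivAt_sin θ).pow 2).const_mul b
    refine (h1.add h2).congr_deriv ?_
    ring
  have hu : HasDerivAt (fun t => (b - a) * Real.sin t * Real.cos t /
        (a * Real.cos t ^ 2 + b * Real.sin t ^ 2))
      (((b - a) * (Real.cos θ ^ 2 - Real.sin θ ^ 2) * (a * Real.cos θ ^ 2 + b * Real.sin θ ^ 2)
        - (b - a) * Real.sin θ * Real.cos θ * (2 * (b - a) * Real.sin θ * Real.cos θ))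
        / (a * Real.cos θ ^ 2 + b * Real.sin θ ^ 2) ^ 2) θ :=
    hN.div hDd hD.ne'
  have harc := hu.arctan
  have hfull := ((hasDerivAt_id θ).add harc).const_mul (1 / (a * b))
  refine hfull.congr_deriv (Eq.symm ?_)
  have hDN : (a * Real.cos θ ^ 2 + b * Real.sin θ ^ 2) ^ 2 + ((b - a) * Real.sin θ * Real.cos θ) ^ 2
      = p * Real.cos θ ^ 2 + q * Real.sin θ ^ 2 := by
    linear_combination (a ^ 2 * Real.cos θ ^ 2 + b ^ 2 * Real.sin θ ^ 2) * hs
      + Real.cos θ ^ 2 * ha2 + Real.sin θ ^ 2 * hb2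
  have h1u : 1 + ((b - a) * Real.sin θ * Real.cos θ /
      (a * Real.cos θ ^ 2 + b * Real.sin θ ^ 2)) ^ 2
      = (p * Real.cos θ ^ 2 + q * Real.sin θ ^ 2) /
        (a * Real.cos θ ^ 2 + b * Real.sin θ ^ 2) ^ 2 := by
    rw [← hDN, div_pow]
    field_simp
  have hnum : (b - a) * (Real.cos θ ^ 2 - Real.sin θ ^ 2) * (a * Real.cos θ ^ 2 + b * Real.sin θ ^ 2)
      - (b - a) * Real.sin θ * Real.cos θ * (2 * (b - a) * Real.sin θ * Real.cos θ)
      = (b - a) * (a * Real.cos θ ^ 2 - b * Real.sin θ ^ 2) := by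
    linear_combination ((b - a) * (a * Real.cos θ ^ 2 - b * Real.sin θ ^ 2)) * hs
  rw [hnum, h1u, one_div_div]
  have hstep : (a * Real.cos θ ^ 2 + b * Real.sin θ ^ 2) ^ 2 / (p * Real.cos θ ^ 2 + q * Real.sin θ ^ 2) *
      ((b - a) * (a * Real.cos θ ^ 2 - b * Real.sin θ ^ 2) / (a * Real.cos θ ^ 2 + b * Real.sin θ ^ 2) ^ 2)
      = (b - a) * (a * Real.cos θ ^ 2 - b * Real.sin θ ^ 2) / (p * Real.cos θ ^ 2 + q * Real.sin θ ^ 2) := by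
    field_simp
  rw [hstep]
  field_simp
  linear_combination Real.cos θ ^ 2 * ha2 + Real.sin θ ^ 2 * hb2 - (a * b) * hs

lemma J3_int_diag (p q : ℝ) (hp : 0 < p) (hq : 0 < q) :
    ∫ θ in (0:ℝ)..(2 * π), 1 / (p * Real.cos θ ^ 2 + q * Real.sin θ ^ 2)
      = 2 * π / Real.sqrt (p * q) := by
  have hc : Continuous fun θ : ℝ => 1 / (p * Real.cos θ ^ 2 + q * Real.sin θ ^ 2) := by
    apply Continuous.div continuous_const (by fun_prop)
    exact fun x => (denom_pos p q hp hq x).ne'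
  have := intervalIntegral.integral_eq_sub_of_hasDerivAt
    (f := fun t => (1 / (Real.sqrt p * Real.sqrt q)) *
      (t + Real.arctan ((Real.sqrt q - Real.sqrt p) * Real.sin t * Real.cos t /
        (Real.sqrt p * Real.cos t ^ 2 + Real.sqrt q * Real.sin t ^ 2))))
    (f' := fun θ => 1 / (p * Real.cos θ ^ 2 + q * Real.sin θ ^ 2))
    (fun θ _ => J3_antideriv p q hp hq θ) (hc.intervalIntegrable 0 (2 * π))
  rw [this, Real.sqrt_mul hp.le]
  simp [Real.sin_two_pi, Real.sin_zero]
  ring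

lemma Kpos (g11 g12 g22 : ℝ) (h11 : 0 < g11) (hdet : 0 < g11 * g22 - g12 ^ 2) (θ : ℝ) :
    0 < g11 * Real.cos θ ^ 2 + 2 * g12 * Real.sin θ * Real.cos θ + g22 * Real.sin θ ^ 2 := by
  have hs := Real.sin_sq_add_cos_sq θ
  have hg22 : 0 < g22 := by nlinarith [sq_nonneg g12]
  have key : (g11 + g22) * (g11 * Real.cos θ ^ 2 + 2 * g12 * Real.sin θ * Real.cos θ +
      g22 * Real.sin θ ^ 2)
      = (g11 * Real.cos θ + g12 * Real.sin θ) ^ 2 + (g12 * Real.cos θ + g22 * Real.sin θ) ^ 2 +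
        (g11 * g22 - g12 ^ 2) * (Real.sin θ ^ 2 + Real.cos θ ^ 2) := by ring
  rw [hs, mul_one] at key
  nlinarith [sq_nonneg (g11 * Real.cos θ + g12 * Real.sin θ),
    sq_nonneg (g12 * Real.cos θ + g22 * Real.sin θ)]

lemma J3_int_one (g11 g12 g22 : ℝ) (h11 : 0 < g11) (hdet : 0 < g11 * g22 - g12 ^ 2)
    (hH : 0 < g11 ^ 2 + g22 ^ 2 - 2 * g11 * g22 + 4 * g12 ^ 2) :
    ∫ θ in (0:ℝ)..(2 * π),
      1 / (g11 * Real.cos θ ^ 2 + 2 * g12 * Real.sin θ * Real.cos θ + g22 * Real.sin θ ^ 2)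
      = 2 * π / Real.sqrt (g11 * g22 - g12 ^ 2) := by
  have hg22 : 0 < g22 := by nlinarith [sq_nonneg g12]
  obtain ⟨R, hR, hR2⟩ : ∃ r : ℝ, 0 < r ∧
      r ^ 2 = g11 ^ 2 + g22 ^ 2 - 2 * g11 * g22 + 4 * g12 ^ 2 :=
    ⟨Real.sqrt (g11 ^ 2 + g22 ^ 2 - 2 * g11 * g22 + 4 * g12 ^ 2),
      Real.sqrt_pos.mpr hH, Real.sq_sqrt hH.le⟩
  have hl1 : 0 < (g11 + g22 + R) / 2 := by positivity
  have hprod : ((g11 + g22 + R) / 2) * ((g11 + g22 - R) / 2) = g11 * g22 - g12 ^ 2 := by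
    linear_combination (-(1:ℝ)/4) * hR2
  have hl2 : 0 < (g11 + g22 - R) / 2 := by nlinarith [hl1, hprod, hdet]
  have hRne : R ≠ 0 := hR.ne'
  have hcs : ((g11 - g22) / R) ^ 2 + (2 * g12 / R) ^ 2 = 1 := by
    field_simp
    linear_combination -hR2
  obtain ⟨x, hxc, hxs⟩ : ∃ x, Real.cos x = (g11 - g22) / R ∧ Real.sin x = 2 * g12 / R := by
    have hb1 : -1 ≤ (g11 - g22) / R := by nlinarith [sq_nonneg (2 * g12 / R)]
    have hb2 : (g11 - g22) / R ≤ 1 := by nlinarith [sq_nonneg (2 * g12 / R)]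
    rcases le_or_gt 0 (2 * g12 / R) with hpos | hneg
    · refine ⟨Real.arccos ((g11 - g22) / R), Real.cos_arccos hb1 hb2, ?_⟩
      rw [Real.sin_arccos, show 1 - ((g11 - g22) / R) ^ 2 = (2 * g12 / R) ^ 2 by
        linarith [hcs], Real.sqrt_sq hpos]
    · refine ⟨-Real.arccos ((g11 - g22) / R), ?_, ?_⟩
      · rw [Real.cos_neg]; exact Real.cos_arccos hb1 hb2
      rw [Real.sin_neg, Real.sin_arccos, show 1 - ((g11 - g22) / R) ^ 2 = (2 * g12 / R) ^ 2 by
        linarith [hcs], Real.sqrt_sq_eq_abs, abs_of_neg hneg]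
      ring
  have hKey : ∀ θ : ℝ, g11 * Real.cos θ ^ 2 + 2 * g12 * Real.sin θ * Real.cos θ +
      g22 * Real.sin θ ^ 2 = (g11 + g22 + R) / 2 * Real.cos (θ - x / 2) ^ 2 +
        (g11 + g22 - R) / 2 * Real.sin (θ - x / 2) ^ 2 := by
    intro θ
    have hs := Real.sin_sq_add_cos_sq θ
    have e1 : (g11 + g22 + R) / 2 * Real.cos (θ - x / 2) ^ 2 +
        (g11 + g22 - R) / 2 * Real.sin (θ - x / 2) ^ 2
        = (g11 + g22) / 2 + (R / 2) * Real.cos (2 * (θ - x / 2)) := by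
      rw [Real.sin_sq, Real.cos_sq]; ring
    have e2 : (2 : ℝ) * (θ - x / 2) = 2 * θ - x := by ring
    rw [e1, e2, Real.cos_sub, hxc, hxs, Real.cos_two_mul, Real.sin_two_mul]
    field_simp
    linear_combination (2 * g22) * hs
  have hcomp := intervalIntegral.integral_comp_sub_right (a := (0:ℝ)) (b := 2 * π)
    (fun t => 1 / ((g11 + g22 + R) / 2 * Real.cos t ^ 2 + (g11 + g22 - R) / 2 * Real.sin t ^ 2))
    (x / 2)
  have hper : Function.Periodic
      (fun t : ℝ => 1 / ((g11 + g22 + R) / 2 * Real.cos t ^ 2 +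
        (g11 + g22 - R) / 2 * Real.sin t ^ 2)) (2 * π) := by
    intro t; simp [Real.cos_add_two_pi, Real.sin_add_two_pi]
  have hshift := hper.intervalIntegral_add_eq (-(x / 2)) 0
  calc ∫ θ in (0:ℝ)..(2 * π),
        1 / (g11 * Real.cos θ ^ 2 + 2 * g12 * Real.sin θ * Real.cos θ + g22 * Real.sin θ ^ 2)
      = ∫ θ in (0:ℝ)..(2 * π), 1 / ((g11 + g22 + R) / 2 * Real.cos (θ - x / 2) ^ 2 +
          (g11 + g22 - R) / 2 * Real.sin (θ - x / 2) ^ 2) := by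
        simp only [hKey]
    _ = ∫ θ in ((0:ℝ) - x / 2)..((2 * π) - x / 2),
          1 / ((g11 + g22 + R) / 2 * Real.cos θ ^ 2 + (g11 + g22 - R) / 2 * Real.sin θ ^ 2) :=
        hcomp
    _ = ∫ θ in (0:ℝ)..(2 * π),
          1 / ((g11 + g22 + R) / 2 * Real.cos θ ^ 2 + (g11 + g22 - R) / 2 * Real.sin θ ^ 2) := by
        rw [show (0:ℝ) - x / 2 = -(x / 2) by ring, show 2 * π - x / 2 = -(x / 2) + 2 * π by ring]
        simpa using hshift
    _ = 2 * π / Real.sqrt ((g11 + g22 + R) / 2 * ((g11 + g22 - R) / 2)) :=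
        J3_int_diag _ _ hl1 hl2
    _ = 2 * π / Real.sqrt (g11 * g22 - g12 ^ 2) := by rw [hprod]

lemma J3_hasDerivAt_K (g11 g12 g22 : ℝ) (θ : ℝ) :
    HasDerivAt (fun t => g11 * Real.cos t ^ 2 + 2 * g12 * Real.sin t * Real.cos t +
      g22 * Real.sin t ^ 2)
      (2 * (g22 - g11) * Real.sin θ * Real.cos θ +
        2 * g12 * (Real.cos θ ^ 2 - Real.sin θ ^ 2)) θ := by
  have h1 := ((Real.hasDerivAt_cos θ).pow 2).const_mul g11
  have h2 := (((Real.hasDerivAt_sin θ).const_mul (2 * g12)).mul (Real.hasDerivAt_cos θ))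
  have h3 := ((Real.hasDerivAt_sin θ).pow 2).const_mul g22
  refine ((h1.add h2).add h3).congr_deriv ?_
  ring

lemma J3_int_logderiv (g11 g12 g22 : ℝ) (h11 : 0 < g11) (hdet : 0 < g11 * g22 - g12 ^ 2) :
    ∫ θ in (0:ℝ)..(2 * π),
      (2 * (g22 - g11) * Real.sin θ * Real.cos θ + 2 * g12 * (Real.cos θ ^ 2 - Real.sin θ ^ 2)) /
        (g11 * Real.cos θ ^ 2 + 2 * g12 * Real.sin θ * Real.cos θ + g22 * Real.sin θ ^ 2) = 0 := by
  have hKne : ∀ θ : ℝ, g11 * Real.cos θ ^ 2 + 2 * g12 * Real.sin θ * Real.cos θ +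
      g22 * Real.sin θ ^ 2 ≠ 0 := fun θ => (Kpos g11 g12 g22 h11 hdet θ).ne'
  have hc : Continuous fun θ : ℝ =>
      (2 * (g22 - g11) * Real.sin θ * Real.cos θ + 2 * g12 * (Real.cos θ ^ 2 - Real.sin θ ^ 2)) /
        (g11 * Real.cos θ ^ 2 + 2 * g12 * Real.sin θ * Real.cos θ + g22 * Real.sin θ ^ 2) :=
    Continuous.div (by fun_prop) (by fun_prop) hKne
  have hderiv : ∀ θ ∈ Set.uIcc (0:ℝ) (2 * π), HasDerivAt
      (fun t => Real.log (g11 * Real.cos t ^ 2 + 2 * g12 * Real.sin t * Real.cos t +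
        g22 * Real.sin t ^ 2))
      ((2 * (g22 - g11) * Real.sin θ * Real.cos θ + 2 * g12 * (Real.cos θ ^ 2 - Real.sin θ ^ 2)) /
        (g11 * Real.cos θ ^ 2 + 2 * g12 * Real.sin θ * Real.cos θ + g22 * Real.sin θ ^ 2)) θ :=
    fun θ _ => (J3_hasDerivAt_K g11 g12 g22 θ).log (hKne θ)
  rw [intervalIntegral.integral_eq_sub_of_hasDerivAt hderiv (hc.intervalIntegrable 0 (2 * π))]
  simp [Real.sin_two_pi, Real.cos_two_pi]

lemma J3_decomp_aux (A B C D Kv K'v c2 : ℝ) (hK : Kv ≠ 0) (hD : D ≠ 0)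
    (h : c2 * D = A * Kv + B * K'v + C) :
    c2 / Kv = A / D + (B / D) * (K'v / Kv) + (C / D) * (1 / Kv) := by
  field_simp
  linear_combination h

/-- Evaluation of `J₃` (formula (j3)). -/
theorem J3_eval (g11 g12 g22 : ℝ) (h11 : 0 < g11) (hdet : 0 < g11 * g22 - g12 ^ 2)
    (hH : 0 < g11 ^ 2 + g22 ^ 2 - 2 * g11 * g22 + 4 * g12 ^ 2) :
    (1 / (2 * π)) *
      ∫ θ in (0:ℝ)..(2 * π),
        Real.cos θ ^ 2 /
          (g11 * Real.cos θ ^ 2 + 2 * g12 * Real.sin θ * Real.cos θ +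
            g22 * Real.sin θ ^ 2)
    = (1 / (g11 ^ 2 + g22 ^ 2 - 2 * g11 * g22 + 4 * g12 ^ 2)) *
        ((g22 ^ 2 - g11 * g22 + 2 * g12 ^ 2) * (1 / Real.sqrt (g11 * g22 - g12 ^ 2)) +
          g11 - g22) := by
  set H := g11 ^ 2 + g22 ^ 2 - 2 * g11 * g22 + 4 * g12 ^ 2 with hHdef
  have hHne : H ≠ 0 := hH.ne'
  have hKne : ∀ θ : ℝ, g11 * Real.cos θ ^ 2 + 2 * g12 * Real.sin θ * Real.cos θ +
      g22 * Real.sin θ ^ 2 ≠ 0 := fun θ => (Kpos g11 g12 g22 h11 hdet θ).ne'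
  have hdecomp : ∀ θ : ℝ, Real.cos θ ^ 2 /
      (g11 * Real.cos θ ^ 2 + 2 * g12 * Real.sin θ * Real.cos θ + g22 * Real.sin θ ^ 2)
      = (g11 - g22) / H
        + (g12 / H) * ((2 * (g22 - g11) * Real.sin θ * Real.cos θ +
            2 * g12 * (Real.cos θ ^ 2 - Real.sin θ ^ 2)) /
          (g11 * Real.cos θ ^ 2 + 2 * g12 * Real.sin θ * Real.cos θ + g22 * Real.sin θ ^ 2))
        + ((g22 ^ 2 - g11 * g22 + 2 * g12 ^ 2) / H) *
          (1 / (g11 * Real.cos θ ^ 2 + 2 * g12 * Real.sin θ * Real.cos θ +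
            g22 * Real.sin θ ^ 2)) := by
    intro θ
    have hs := Real.sin_sq_add_cos_sq θ
    have hK := hKne θ
    have hc2 : Real.cos θ ^ 2 * H
        = (g11 - g22) * (g11 * Real.cos θ ^ 2 + 2 * g12 * Real.sin θ * Real.cos θ +
              g22 * Real.sin θ ^ 2)
          + g12 * (2 * (g22 - g11) * Real.sin θ * Real.cos θ +
              2 * g12 * (Real.cos θ ^ 2 - Real.sin θ ^ 2))
          + (g22 ^ 2 - g11 * g22 + 2 * g12 ^ 2) := by
      rw [hHdef]
      linear_combination (g22 ^ 2 + 2 * g12 ^ 2 - g11 * g22) * hs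
    exact J3_decomp_aux _ _ _ _ _ _ _ hK hHne hc2
  have hcont1 : Continuous fun θ : ℝ =>
      (2 * (g22 - g11) * Real.sin θ * Real.cos θ + 2 * g12 * (Real.cos θ ^ 2 - Real.sin θ ^ 2)) /
        (g11 * Real.cos θ ^ 2 + 2 * g12 * Real.sin θ * Real.cos θ + g22 * Real.sin θ ^ 2) :=
    Continuous.div (by fun_prop) (by fun_prop) hKne
  have hcont2 : Continuous fun θ : ℝ =>
      1 / (g11 * Real.cos θ ^ 2 + 2 * g12 * Real.sin θ * Real.cos θ + g22 * Real.sin θ ^ 2) :=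
    Continuous.div continuous_const (by fun_prop) hKne
  have hsplit : ∫ θ in (0:ℝ)..(2 * π),
      Real.cos θ ^ 2 /
        (g11 * Real.cos θ ^ 2 + 2 * g12 * Real.sin θ * Real.cos θ + g22 * Real.sin θ ^ 2)
      = (2 * π) * ((g11 - g22) / H)
        + (g12 / H) * (∫ θ in (0:ℝ)..(2 * π),
            (2 * (g22 - g11) * Real.sin θ * Real.cos θ +
              2 * g12 * (Real.cos θ ^ 2 - Real.sin θ ^ 2)) /
            (g11 * Real.cos θ ^ 2 + 2 * g12 * Real.sin θ * Real.cos θ + g22 * Real.sin θ ^ 2))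
        + ((g22 ^ 2 - g11 * g22 + 2 * g12 ^ 2) / H) * (∫ θ in (0:ℝ)..(2 * π),
            1 / (g11 * Real.cos θ ^ 2 + 2 * g12 * Real.sin θ * Real.cos θ +
              g22 * Real.sin θ ^ 2)) := by
    rw [intervalIntegral.integral_congr (g := fun θ => (g11 - g22) / H
      + (g12 / H) * ((2 * (g22 - g11) * Real.sin θ * Real.cos θ +
          2 * g12 * (Real.cos θ ^ 2 - Real.sin θ ^ 2)) /
        (g11 * Real.cos θ ^ 2 + 2 * g12 * Real.sin θ * Real.cos θ + g22 * Real.sin θ ^ 2))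
      + ((g22 ^ 2 - g11 * g22 + 2 * g12 ^ 2) / H) *
        (1 / (g11 * Real.cos θ ^ 2 + 2 * g12 * Real.sin θ * Real.cos θ +
          g22 * Real.sin θ ^ 2))) (fun θ _ => hdecomp θ)]
    rw [intervalIntegral.integral_add (by
        exact ((continuous_const.add (continuous_const.mul hcont1))).intervalIntegrable 0 (2 * π))
      (by exact (continuous_const.mul hcont2).intervalIntegrable 0 (2 * π))]
    rw [intervalIntegral.integral_add ((continuous_const).intervalIntegrable 0 (2 * π))
      (by exact (continuous_const.mul hcont1).intervalIntegrable 0 (2 * π))]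
    rw [intervalIntegral.integral_const, intervalIntegral.integral_const_mul,
      intervalIntegral.integral_const_mul]
    simp
  rw [hsplit, J3_int_logderiv g11 g12 g22 h11 hdet, J3_int_one g11 g12 g22 h11 hdet hH]
  have hsq : Real.sqrt (g11 * g22 - g12 ^ 2) ≠ 0 := (Real.sqrt_pos.mpr hdet).ne'
  have hπ : (π : ℝ) ≠ 0 := Real.pi_ne_zero
  field_simp
  ring
end

section
/- Flux transformation identity underlying conservation across cubed-sphere edges (Theorem 3.2): let A be an invertible real 2×2 matrix with Λ := det A > 0, let G = Aᵀ·A with inverse G⁻¹ = [[g¹¹, g¹²], [g¹², g²²]], let h > 0, g > 0, u, v ∈ ℝ, and set (u_s, v_s)ᵀ = A·(u, v)ᵀ. Define the 3×2 flux matrix F = [[Λ·h·u, Λ·h·v], [Λ·(h·u² + ½g·g¹¹·h²), Λ·(h·u·v + ½g·g¹²·h²)], [Λ·(h·u·v + ½g·g¹²·h²), Λ·(h·v² + ½g·g²²·h²)]] and the block matrix B = [[1, 0, 0], [0, A₁₁, A₁₂], [0, A₂₁, A₂₂]]. Then B · F · Aᵀ = Λ · [[h·u_s, h·v_s], [h·u_s²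 + ½g·h², h·u_s·v_s], [h·u_s·v_s, h·v_s² + ½g·h²]]. -/
set_option maxHeartbeats 1000000


open Matrix

/-- Flux transformation identity underlying conservation across
cubed-sphere edges (Theorem 3.2). -/
theorem flux_transformation
    (A : Matrix (Fin 2) (Fin 2) ℝ) (hA : IsUnit A.det) (hΛ : 0 < A.det)
    (g h u v : ℝ) (hg : 0 < g) (hh : 0 < h) :
    let Λ := A.det
    let Ginv := (Aᵀ * A)⁻¹
    let g11 := Ginv 0 0
    let g12 := Ginv 0 1
    let g22 := Ginv 1 1
    let us := A 0 0 * u + A 0 1 * v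
    let vs := A 1 0 * u + A 1 1 * v
    let F : Matrix (Fin 3) (Fin 2) ℝ :=
      !![Λ * (h * u), Λ * (h * v);
         Λ * (h * u ^ 2 + (1 / 2) * g * g11 * h ^ 2),
           Λ * (h * u * v + (1 / 2) * g * g12 * h ^ 2);
         Λ * (h * u * v + (1 / 2) * g * g12 * h ^ 2),
           Λ * (h * v ^ 2 + (1 / 2) * g * g22 * h ^ 2)]
    let B : Matrix (Fin 3) (Fin 3) ℝ :=
      !![1, 0, 0; 0, A 0 0, A 0 1; 0, A 1 0, A 1 1]
    B * F * Aᵀ =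
      Λ • !![h * us, h * vs;
             h * us ^ 2 + (1 / 2) * g * h ^ 2, h * us * vs;
             h * us * vs, h * vs ^ 2 + (1 / 2) * g * h ^ 2] := by
  intro Λ Ginv g11 g12 g22 us vs F B
  have hd : A.det ≠ 0 := ne_of_gt hΛ
  have hGsym : (Aᵀ * A)ᵀ = Aᵀ * A := by
    rw [Matrix.transpose_mul, Matrix.transpose_transpose]
  have hsym : Ginv 1 0 = Ginv 0 1 := by
    show (Aᵀ * A)⁻¹ 1 0 = (Aᵀ * A)⁻¹ 0 1
    conv_lhs => rw [show (Aᵀ * A)⁻¹ 1 0 = ((Aᵀ * A)⁻¹)ᵀ 0 1 from rfl,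
      Matrix.transpose_nonsing_inv, hGsym]
  have hAG : A * Ginv * Aᵀ = 1 := by
    show A * (Aᵀ * A)⁻¹ * Aᵀ = 1
    rw [Matrix.mul_inv_rev, ← Matrix.mul_assoc, Matrix.mul_nonsing_inv A hA,
      Matrix.one_mul, Matrix.nonsing_inv_mul Aᵀ (by rwa [Matrix.det_transpose])]
  have s1 := congrFun (congrFun hAG 0) 0
  have s2 := congrFun (congrFun hAG 0) 1
  have s3 := congrFun (congrFun hAG 1) 1
  simp [Matrix.mul_apply, Fin.sum_univ_succ, Matrix.transpose_apply] at s1 s2 s3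
  rw [hsym] at s1 s2 s3 <;> try rfl
  ext i j
  fin_cases i <;> fin_cases j
  · simp [B, F, Λ, us, vs, Matrix.mul_apply, Fin.sum_univ_succ] <;> ring
  · simp [B, F, Λ, us, vs, Matrix.mul_apply, Fin.sum_univ_succ] <;> ring
  · simp [B, F, Λ, us, vs, g11, g12, g22, Matrix.mul_apply, Fin.sum_univ_succ] <;>
      linear_combination (A.det * ((1 / 2) * g * h ^ 2)) * s1
  · simp [B, F, Λ, us, vs, g11, g12, g22, Matrix.mul_apply, Fin.sum_univ_succ] <;>
      linear_combination (A.det * ((1 / 2) * g * h ^ 2)) * s2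
  · simp [B, F, Λ, us, vs, g11, g12, g22, Matrix.mul_apply, Fin.sum_univ_succ] <;>
      linear_combination (A.det * ((1 / 2) * g * h ^ 2)) * s2
  · simp [B, F, Λ, us, vs, g11, g12, g22, Matrix.mul_apply, Fin.sum_univ_succ] <;>
      linear_combination (A.det * ((1 / 2) * g * h ^ 2)) * s3
end
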